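/- arXiv:2603.28748 — 5 statements merged into one kernel-verified Lean document; each statement's English description precedes it below -/
import Mathlib

section
/- For all integers s ≥ 2 and t ≥ 2, the odd Hadwiger number of the Cartesian product of two complete graphs satisfies oh(K_s □ K_t) ≥ s + t − 2. -/
open SimpleGraph

/-- `H` is an odd minor of `G`: there are pairwise vertex-disjoint subtrees of `G`, one for
each vertex of `H`, and a 2-colouring of the vertices which is proper on each tree, such that
for every edge of `H` there is a monochromatic edge of `G` between the corresponding trees. -/
def IsOddMinorOf {W V : Type*} (H : SimpleGraph W) (G : SimpleGraph V) : Prop :=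
  ∃ (T : W → G.Subgraph) (c : V → Fin 2),
    (∀ w, (T w).coe.IsTree) ∧
    (Pairwise fun w w' => Disjoint (T w).verts (T w').verts) ∧
    (∀ w, ∀ x y, (T w).Adj x y → c x ≠ c y) ∧
    (∀ w w', H.Adj w w' →
      ∃ x y, x ∈ (T w).verts ∧ y ∈ (T w').verts ∧ G.Adj x y ∧ c x = c y)

/-- The odd Hadwiger number of `G`: the largest `r` such that `K_r` is an odd minor of `G`. -/
noncomputable def oddHadwiger {V : Type*} [Fintype V] (G : SimpleGraph V) : ℕ :=
  sSup {r : ℕ | IsOddMinorOf (⊤ : SimpleGraph (Fin r)) G}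

/-- The Cartesian product `G □ H`. -/
def cartProd {α β : Type*} (G : SimpleGraph α) (H : SimpleGraph β) : SimpleGraph (α × β) where
  Adj x y := (x.1 = y.1 ∧ H.Adj x.2 y.2) ∨ (x.2 = y.2 ∧ G.Adj x.1 y.1)
  symm := by
    constructor
    rintro x y (⟨h1, h2⟩ | ⟨h1, h2⟩)
    · exact Or.inl ⟨h1.symm, h2.symm⟩
    · exact Or.inr ⟨h1.symm, h2.symm⟩
  loopless := by
    constructor
    rintro x (⟨_, h⟩ | ⟨_, h⟩)
    · exact H.irrefl h
    · exact G.irrefl h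

/-- The strong product `G ⊠ H`. -/
def strongProd {α β : Type*} (G : SimpleGraph α) (H : SimpleGraph β) : SimpleGraph (α × β) where
  Adj x y := (x.1 = y.1 ∧ H.Adj x.2 y.2) ∨ (x.2 = y.2 ∧ G.Adj x.1 y.1) ∨
    (G.Adj x.1 y.1 ∧ H.Adj x.2 y.2)
  symm := by
    constructor
    rintro x y (⟨h1, h2⟩ | ⟨h1, h2⟩ | ⟨h1, h2⟩)
    · exact Or.inl ⟨h1.symm, h2.symm⟩
    · exact Or.inr (Or.inl ⟨h1.symm, h2.symm⟩)
    · exact Or.inr (Or.inr ⟨h1.symm, h2.symm⟩)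
  loopless := by
    constructor
    rintro x (⟨_, h⟩ | ⟨_, h⟩ | ⟨h, _⟩)
    · exact H.irrefl h
    · exact G.irrefl h
    · exact G.irrefl h

/-- The lexicographic product `G ∘ H`. -/
def lexProd {α β : Type*} (G : SimpleGraph α) (H : SimpleGraph β) : SimpleGraph (α × β) where
  Adj x y := G.Adj x.1 y.1 ∨ (x.1 = y.1 ∧ H.Adj x.2 y.2)
  symm := by
    constructor
    rintro x y (h | ⟨h1, h2⟩)
    · exact Or.inl h.symm
    · exact Or.inr ⟨h1.symm, h2.symm⟩
  loopless := by
    constructor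
    rintro x (h | ⟨_, h⟩)
    · exact G.irrefl h
    · exact H.irrefl h

/-- The direct (tensor) product `G × H`. -/
def dirProd {α β : Type*} (G : SimpleGraph α) (H : SimpleGraph β) : SimpleGraph (α × β) where
  Adj x y := G.Adj x.1 y.1 ∧ H.Adj x.2 y.2
  symm := by
    constructor
    rintro x y ⟨h1, h2⟩
    exact ⟨h1.symm, h2.symm⟩
  loopless := by
    constructor
    rintro x ⟨h, _⟩
    exact G.irrefl h


section StarTree

variable {V : Type*}

lemma not_reachable_of_isolated {G : SimpleGraph V} {x y : V}
    (hiso : ∀ z, ¬ G.Adj x z) (hxy : x ≠ y) : ¬ G.Reachable x y := by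
  rintro ⟨w⟩
  cases w with
  | nil => exact hxy rfl
  | cons h _ => exact hiso _ h

lemma star_isTree {G : SimpleGraph V} (c : V)
    (h : ∀ a b, G.Adj a b ↔ (a ≠ b ∧ (a = c ∨ b = c))) : G.IsTree := by
  have key : ∀ x, G.Reachable x c := by
    intro x
    by_cases hx : x = c
    · subst hx; exact Reachable.refl x
    · exact ((h x c).mpr ⟨hx, Or.inr rfl⟩).reachable
  constructor
  · rw [connected_iff]
    exact ⟨fun u v => (key u).trans (key v).symm, ⟨c⟩⟩
  · rw [isAcyclic_iff_forall_adj_isBridge]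
    intro a b hab
    rw [isBridge_iff]
    obtain ⟨hne, hc⟩ := (h a b).mp hab
    rcases hc with rfl | rfl
    · -- a is the center
      intro hr
      refine not_reachable_of_isolated (x := b) (y := a) ?_ hne.symm hr.symm
      intro z hz
      rw [deleteEdges_adj] at hz
      obtain ⟨hz1, hz2⟩ := hz
      obtain ⟨hbz, hzc⟩ := (h b z).mp hz1
      rcases hzc with h' | h'
      · exact hne h'.symm
      · apply hz2
        simp [h', Sym2.eq_swap]
    · -- b is the center
      refine not_reachable_of_isolated (x := a) (y := b) ?_ hne
      intro z hz
      rw [deleteEdges_adj] at hz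
      obtain ⟨hz1, hz2⟩ := hz
      obtain ⟨haz, hzc⟩ := (h a z).mp hz1
      rcases hzc with h' | h'
      · exact hne h'
      · apply hz2
        simp [h']

variable (G : SimpleGraph V)

/-- A star-shaped subgraph: all edges between the centre `c` and other vertices of `Vs`,
provided those are edges of `G`. -/
def starSub (Vs : Set V) (c : V) : G.Subgraph where
  verts := Vs
  Adj x y := x ∈ Vs ∧ y ∈ Vs ∧ x ≠ y ∧ (x = c ∨ y = c) ∧ G.Adj x y
  adj_sub h := h.2.2.2.2
  edge_vert h := h.1
  symm := by
    constructor
    rintro x y ⟨h1, h2, h3, h4, h5⟩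
    exact ⟨h2, h1, h3.symm, h4.symm, h5.symm⟩

lemma starSub_verts (Vs : Set V) (c : V) : (starSub G Vs c).verts = Vs := rfl

lemma starSub_isTree {Vs : Set V} {c : V} (hc : c ∈ Vs)
    (hadj : ∀ x ∈ Vs, ∀ y ∈ Vs, x ≠ y → (x = c ∨ y = c) → G.Adj x y) :
    (starSub G Vs c).coe.IsTree := by
  apply star_isTree (⟨c, hc⟩ : (starSub G Vs c).verts)
  rintro ⟨a, ha⟩ ⟨b, hb⟩
  constructor
  · rintro ⟨_, _, h3, h4, _⟩
    refine ⟨fun he => h3 (congrArg Subtype.val he), ?_⟩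
    rcases h4 with h | h
    · exact Or.inl (Subtype.ext h)
    · exact Or.inr (Subtype.ext h)
  · rintro ⟨h3, h4⟩
    have hne : a ≠ b := fun he => h3 (Subtype.ext he)
    have h4' : a = c ∨ b = c :=
      h4.imp (fun h => congrArg Subtype.val h) (fun h => congrArg Subtype.val h)
    exact ⟨ha, hb, hne, h4', hadj a ha b hb hne h4'⟩

end StarTree

section Construction

lemma oddMinor_card_le {W V : Type*} [Fintype V] [Fintype W] {H : SimpleGraph W}
    {G : SimpleGraph V} (h : IsOddMinorOf H G) : Fintype.card W ≤ Fintype.card V := by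
  obtain ⟨T, c, htree, hdisj, -, -⟩ := h
  have hne : ∀ w, Nonempty (T w).verts := fun w => (htree w).isConnected.nonempty
  have hf : ∀ w, ((hne w).some : V) ∈ (T w).verts := fun w => ((hne w).some).2
  have hinj : Function.Injective (fun w => ((hne w).some : V)) := by
    intro w w' he
    by_contra hww
    have he' : ((hne w).some : V) = ((hne w').some : V) := he
    apply Set.disjoint_left.mp (hdisj hww) (hf w)
    rw [he']
    exact hf w'
  exact Fintype.card_le_of_injective _ hinj

variable (s t : ℕ)

/-- The 2-colouring used for the odd `K_{s+t-2}` minor in `K_s □ K_t`. -/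
def myc : Fin s × Fin t → Fin 2 := fun p =>
  if (p.2 : ℕ) = 0 then 0 else if (p.2 : ℕ) = 1 then 1 else if (p.1 : ℕ) = 0 then 0 else 1

lemma myc_j0 (p : Fin s × Fin t) (h : (p.2 : ℕ) = 0) : myc s t p = 0 := by
  simp only [myc]; rw [if_pos h]

lemma myc_j1 (p : Fin s × Fin t) (h : (p.2 : ℕ) = 1) : myc s t p = 1 := by
  simp only [myc]; rw [if_neg (by omega), if_pos h]

lemma myc_col0 (p : Fin s × Fin t) (h2 : 2 ≤ (p.2 : ℕ)) (h0 : (p.1 : ℕ) = 0) :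
    myc s t p = 0 := by
  simp only [myc]; rw [if_neg (by omega), if_neg (by omega), if_pos h0]

lemma myc_col1 (p : Fin s × Fin t) (h2 : 2 ≤ (p.2 : ℕ)) (h0 : (p.1 : ℕ) ≠ 0) :
    myc s t p = 1 := by
  simp only [myc]; rw [if_neg (by omega), if_neg (by omega), if_neg h0]

/-- The branch sets: for `k < s`, the two-vertex set `{(k,0),(k,1)}`; for `k ≥ s`,
the column `k - s + 2` (a star centred at row `0`). -/
def myT (hs : 2 ≤ s) (ht : 2 ≤ t) (k : Fin (s + t - 2)) :
    (cartProd (⊤ : SimpleGraph (Fin s)) (⊤ : SimpleGraph (Fin t))).Subgraph :=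
  if h : (k : ℕ) < s then
    starSub (cartProd (⊤ : SimpleGraph (Fin s)) (⊤ : SimpleGraph (Fin t))) {(⟨k, h⟩, ⟨0, by omega⟩), (⟨k, h⟩, ⟨1, by omega⟩)} (⟨k, h⟩, ⟨0, by omega⟩)
  else
    starSub (cartProd (⊤ : SimpleGraph (Fin s)) (⊤ : SimpleGraph (Fin t))) {p | (p.2 : ℕ) = (k : ℕ) - s + 2}
      (⟨0, by omega⟩, ⟨(k : ℕ) - s + 2, by have := k.isLt; omega⟩)

lemma myT_lt (hs : 2 ≤ s) (ht : 2 ≤ t) (k : Fin (s + t - 2)) (h : (k : ℕ) < s) :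
    myT s t hs ht k =
      starSub (cartProd (⊤ : SimpleGraph (Fin s)) (⊤ : SimpleGraph (Fin t))) {(⟨k, h⟩, ⟨0, by omega⟩), (⟨k, h⟩, ⟨1, by omega⟩)} (⟨k, h⟩, ⟨0, by omega⟩) :=
  dif_pos h

lemma myT_ge (hs : 2 ≤ s) (ht : 2 ≤ t) (k : Fin (s + t - 2)) (h : ¬ (k : ℕ) < s) :
    myT s t hs ht k =
      starSub (cartProd (⊤ : SimpleGraph (Fin s)) (⊤ : SimpleGraph (Fin t))) {p | (p.2 : ℕ) = (k : ℕ) - s + 2}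
        (⟨0, by omega⟩, ⟨(k : ℕ) - s + 2, by have := k.isLt; omega⟩) :=
  dif_neg h

end Construction

theorem stmt_2 (s t : ℕ) (hs : 2 ≤ s) (ht : 2 ≤ t) :
    oddHadwiger (cartProd (⊤ : SimpleGraph (Fin s)) (⊤ : SimpleGraph (Fin t))) ≥ s + t - 2 := by
  have hbdd : BddAbove {r : ℕ |
      IsOddMinorOf (⊤ : SimpleGraph (Fin r))
        (cartProd (⊤ : SimpleGraph (Fin s)) (⊤ : SimpleGraph (Fin t)))} := by
    refine ⟨s * t, fun r hr => ?_⟩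
    simpa using oddMinor_card_le hr
  refine le_csSup hbdd ?_
  refine ⟨myT s t hs ht, myc s t, ?_, ?_, ?_, ?_⟩
  · -- each branch set is a tree
    intro k
    by_cases h : (k : ℕ) < s
    · rw [myT_lt s t hs ht k h]
      apply starSub_isTree _ (Set.mem_insert _ _)
      intro x hx y hy hxy _
      simp only [Set.mem_insert_iff, Set.mem_singleton_iff] at hx hy
      rcases hx with rfl | rfl <;> rcases hy with rfl | rfl
      · exact absurd rfl hxy
      · exact Or.inl ⟨rfl, Fin.ne_of_val_ne (Nat.zero_ne_one)⟩
      · exact Or.inl ⟨rfl, Fin.ne_of_val_ne (Nat.one_ne_zero)⟩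
      · exact absurd rfl hxy
    · rw [myT_ge s t hs ht k h]
      apply starSub_isTree _ (by rfl)
      intro x hx y hy hxy _
      have hxy2 : x.2 = y.2 := Fin.ext (hx.trans hy.symm)
      exact Or.inr ⟨hxy2, fun h1 => hxy (Prod.ext h1 hxy2)⟩
  · -- disjointness
    intro k k' hne
    rw [Set.disjoint_left]
    intro p hp hp'
    by_cases h : (k : ℕ) < s <;> by_cases h' : (k' : ℕ) < s
    · rw [myT_lt s t hs ht k h] at hp
      rw [myT_lt s t hs ht k' h'] at hp'
      simp only [starSub_verts, Set.mem_insert_iff, Set.mem_singleton_iff] at hp hp'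
      have h1 : (p.1 : ℕ) = (k : ℕ) := by rcases hp with rfl | rfl <;> rfl
      have h2 : (p.1 : ℕ) = (k' : ℕ) := by rcases hp' with rfl | rfl <;> rfl
      exact hne (Fin.ext (by omega))
    · rw [myT_lt s t hs ht k h] at hp
      rw [myT_ge s t hs ht k' h'] at hp'
      simp only [starSub_verts, Set.mem_insert_iff, Set.mem_singleton_iff] at hp
      have h1 : (p.2 : ℕ) = 0 ∨ (p.2 : ℕ) = 1 := by
        rcases hp with rfl | rfl
        · exact Or.inl rfl
        · exact Or.inr rfl
      have h2 : (p.2 : ℕ) = (k' : ℕ) - s + 2 := hp'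
      omega
    · rw [myT_ge s t hs ht k h] at hp
      rw [myT_lt s t hs ht k' h'] at hp'
      simp only [starSub_verts, Set.mem_insert_iff, Set.mem_singleton_iff] at hp'
      have h1 : (p.2 : ℕ) = 0 ∨ (p.2 : ℕ) = 1 := by
        rcases hp' with rfl | rfl
        · exact Or.inl rfl
        · exact Or.inr rfl
      have h2 : (p.2 : ℕ) = (k : ℕ) - s + 2 := hp
      omega
    · rw [myT_ge s t hs ht k h] at hp
      rw [myT_ge s t hs ht k' h'] at hp'
      have h1 : (p.2 : ℕ) = (k : ℕ) - s + 2 := hp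
      have h2 : (p.2 : ℕ) = (k' : ℕ) - s + 2 := hp'
      have h3 : (k : ℕ) ≠ (k' : ℕ) := fun hh => hne (Fin.ext hh)
      omega
  · -- proper on each tree
    intro k x y hadj
    by_cases h : (k : ℕ) < s
    · rw [myT_lt s t hs ht k h] at hadj
      obtain ⟨hx, hy, hxy, -, -⟩ := hadj
      simp only [starSub_verts, Set.mem_insert_iff, Set.mem_singleton_iff] at hx hy
      rcases hx with rfl | rfl <;> rcases hy with rfl | rfl
      · exact absurd rfl hxy
      · rw [myc_j0 s t _ rfl, myc_j1 s t _ rfl]; decide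
      · rw [myc_j1 s t _ rfl, myc_j0 s t _ rfl]; decide
      · exact absurd rfl hxy
    · rw [myT_ge s t hs ht k h] at hadj
      obtain ⟨hx, hy, hxy, hstar, -⟩ := hadj
      have hx2 : (x.2 : ℕ) = (k : ℕ) - s + 2 := hx
      have hy2 : (y.2 : ℕ) = (k : ℕ) - s + 2 := hy
      rcases hstar with hc | hc
      · have hx1 : (x.1 : ℕ) = 0 := by rw [hc]
        have hy1 : (y.1 : ℕ) ≠ 0 := by
          intro hh
          exact hxy (Prod.ext (Fin.ext (by omega)) (Fin.ext (by omega)))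
        rw [myc_col0 s t x (by omega) hx1, myc_col1 s t y (by omega) hy1]
        decide
      · have hy1 : (y.1 : ℕ) = 0 := by rw [hc]
        have hx1 : (x.1 : ℕ) ≠ 0 := by
          intro hh
          exact hxy (Prod.ext (Fin.ext (by omega)) (Fin.ext (by omega)))
        rw [myc_col1 s t x (by omega) hx1, myc_col0 s t y (by omega) hy1]
        decide
  · -- monochromatic edges between branch sets
    intro k k' hkk'
    rw [top_adj] at hkk'
    have hvalne : (k : ℕ) ≠ (k' : ℕ) := fun hh => hkk' (Fin.ext hh)
    have key : ∀ a b : Fin (s + t - 2), (a : ℕ) < s → ¬ (b : ℕ) < s →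
        ∃ x y, x ∈ (myT s t hs ht a).verts ∧ y ∈ (myT s t hs ht b).verts ∧
          (cartProd (⊤ : SimpleGraph (Fin s)) (⊤ : SimpleGraph (Fin t))).Adj x y ∧
          myc s t x = myc s t y := by
      intro a b ha hb
      rw [myT_lt s t hs ht a ha, myT_ge s t hs ht b hb]
      have hb2 : 2 ≤ (b : ℕ) - s + 2 := by omega
      by_cases ha0 : (a : ℕ) = 0
      · refine ⟨(⟨a, ha⟩, ⟨0, by omega⟩),
          (⟨0, by omega⟩, ⟨(b : ℕ) - s + 2, by have := b.isLt; omega⟩),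
          Set.mem_insert _ _, rfl, ?_, ?_⟩
        · exact Or.inl ⟨Fin.ext ha0, Fin.ne_of_val_ne (by omega : (0 : ℕ) ≠ (b : ℕ) - s + 2)⟩
        · rw [myc_j0 s t _ rfl, myc_col0 s t _ hb2 rfl]
      · refine ⟨(⟨a, ha⟩, ⟨1, by omega⟩),
          (⟨a, ha⟩, ⟨(b : ℕ) - s + 2, by have := b.isLt; omega⟩),
          Set.mem_insert_of_mem _ rfl, rfl, ?_, ?_⟩
        · exact Or.inl ⟨rfl, Fin.ne_of_val_ne (by omega : (1 : ℕ) ≠ (b : ℕ) - s + 2)⟩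
        · rw [myc_j1 s t _ rfl, myc_col1 s t _ hb2 ha0]
    by_cases h : (k : ℕ) < s <;> by_cases h' : (k' : ℕ) < s
    · rw [myT_lt s t hs ht k h, myT_lt s t hs ht k' h']
      refine ⟨(⟨k, h⟩, ⟨0, by omega⟩), (⟨k', h'⟩, ⟨0, by omega⟩),
        Set.mem_insert _ _, Set.mem_insert _ _, ?_, ?_⟩
      · exact Or.inr ⟨rfl, Fin.ne_of_val_ne hvalne⟩
      · rw [myc_j0 s t _ rfl, myc_j0 s t _ rfl]
    · exact key k k' h h'
    · obtain ⟨x, y, hx, hy, hadj, hcc⟩ := key k' k h' h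
      exact ⟨y, x, hy, hx, hadj.symm, hcc.symm⟩
    · rw [myT_ge s t hs ht k h, myT_ge s t hs ht k' h']
      refine ⟨(⟨0, by omega⟩, ⟨(k : ℕ) - s + 2, by have := k.isLt; omega⟩),
        (⟨0, by omega⟩, ⟨(k' : ℕ) - s + 2, by have := k'.isLt; omega⟩), rfl, rfl, ?_, ?_⟩
      · exact Or.inl ⟨rfl, Fin.ne_of_val_ne (by omega : (k : ℕ) - s + 2 ≠ (k' : ℕ) - s + 2)⟩
      · rw [myc_col0 s t _ (by omega : 2 ≤ (k : ℕ) - s + 2) rfl,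
          myc_col0 s t _ (by omega : 2 ≤ (k' : ℕ) - s + 2) rfl]
end

section
/- Let G and H be graphs with odd Hadwiger numbers oh(G) = s ≥ 2 and oh(H) = t ≥ 2. Then the odd Hadwiger number of the strong product satisfies oh(G ⊠ H) ≥ s·t. -/
open SimpleGraph

namespace OddHadwigerAux

open Walk

variable {α : Type*}

lemma myrotate_support_subset [DecidableEq α] {G : SimpleGraph α} {v u : α} (c : G.Walk v v)
    (hu : u ∈ c.support) {x : α} (hx : x ∈ (c.rotate u hu).support) : x ∈ c.support := by
  rw [support_eq_cons (c.rotate u hu), List.mem_cons] at hx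
  rcases hx with rfl | hx
  · exact hu
  · have := (support_rotate c u hu).mem_iff.mp hx
    rw [support_eq_cons c]
    exact List.mem_cons_of_mem _ this

lemma isTree_of_parent [Fintype α] [DecidableEq α] (G : SimpleGraph α) (r : α) (par : α → α) (ht : α → ℕ)
    (h1 : ∀ v, v ≠ r → G.Adj v (par v))
    (h2 : ∀ v, v ≠ r → ht (par v) < ht v)
    (h3 : ∀ v w, G.Adj v w → (v ≠ r ∧ w = par v) ∨ (w ≠ r ∧ v = par w)) :
    G.IsTree := by
  have key : ∀ n v, ht v ≤ n → G.Reachable v r := by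
    intro n
    induction n with
    | zero =>
      intro v hv
      rcases eq_or_ne v r with rfl | hne
      · exact ⟨Walk.nil⟩
      · exact absurd (h2 v hne) (by omega)
    | succ n ih =>
      intro v hv
      rcases eq_or_ne v r with rfl | hne
      · exact ⟨Walk.nil⟩
      · exact ((h1 v hne).reachable).trans (ih (par v) (by have := h2 v hne; omega))
  have hne : Nonempty α := ⟨r⟩
  refine ⟨Connected.mk fun v w => (key (ht v) v le_rfl).trans (key (ht w) w le_rfl).symm, ?_⟩
  · intro v c hc
    -- pick a vertex of maximal height on the cycle
    obtain ⟨u, hu, humax⟩ := c.support.toFinset.exists_max_image ht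
      ⟨v, List.mem_toFinset.mpr c.start_mem_support⟩
    replace hu : u ∈ c.support := List.mem_toFinset.mp hu
    have humax' : ∀ x ∈ c.support, ht x ≤ ht u := fun x hx =>
      humax x (List.mem_toFinset.mpr hx)
    have hc' := hc.rotate hu
    set c' := c.rotate u hu with hc'def
    clear_value c'
    cases c' with
    | nil => exact hc'.not_of_nil
    | cons hadj q =>
      rename_i a
      rw [cons_isCycle_iff] at hc'
      obtain ⟨hq, he⟩ := hc'
      have hmem : ∀ x ∈ (Walk.cons hadj q).support, x ∈ c.support := by
        rw [hc'def]; exact fun x hx => myrotate_support_subset c hu hx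
      rcases h3 u a hadj with ⟨hur, hpar⟩ | ⟨har, hpar⟩
      · -- a = par u; examine last edge of q (first of q.reverse)
        have hne : u ≠ a := G.ne_of_adj hadj
        obtain ⟨b, hub, q', hq'⟩ := exists_eq_cons_of_ne hne q.reverse
        rcases h3 u b hub with ⟨-, hb⟩ | ⟨hbr, hb⟩
        · -- b = par u = a, so s(u,a) ∈ q.edges, contradiction
          apply he
          have : s(u, b) ∈ q.reverse.edges := by rw [hq']; simp
          rw [edges_reverse, List.mem_reverse] at this
          rwa [hb, ← hpar] at this
        · -- u = par b, so ht u < ht b, contradicting maximality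
          have hbmem : b ∈ (Walk.cons hadj q).support := by
            have : b ∈ q.reverse.support := by rw [hq']; simp
            rw [support_reverse, List.mem_reverse] at this
            simp [this]
          exact absurd (humax' b (hmem b hbmem)) (by have := h2 b hbr; rw [← hb] at this; omega)
      · -- u = par a: ht u < ht a but a on cycle
        have hamem : a ∈ (Walk.cons hadj q).support := by simp
        exact absurd (humax' a (hmem a hamem)) (by have := h2 a har; rw [← hpar] at this; omega)

lemma exists_parent [DecidableEq α] {G : SimpleGraph α} (hG : G.IsTree) (r : α) :
    ∃ (par : α → α) (ht : α → ℕ),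
      (∀ v, v ≠ r → G.Adj v (par v)) ∧
      (∀ v, v ≠ r → ht (par v) < ht v) ∧
      (∀ v w, G.Adj v w → (v ≠ r ∧ w = par v) ∨ (w ≠ r ∧ v = par w)) := by
  classical
  choose P hP hPu using fun v => hG.existsUnique_path v r
  refine ⟨fun v => (P v).getVert 1, fun v => (P v).length, ?_, ?_, ?_⟩
  all_goals
    have step : ∀ v, v ≠ r →
        G.Adj v ((P v).getVert 1) ∧ (P ((P v).getVert 1)).length + 1 = (P v).length := by
      intro v hv
      obtain ⟨b, hadj, q, hq⟩ := exists_eq_cons_of_ne hv (P v)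
      have hb : (P v).getVert 1 = b := by rw [hq]; simp [Walk.getVert_cons_succ]
      have hqpath : q.IsPath := by
        have := hP v; rw [hq, Walk.cons_isPath_iff] at this; exact this.1
      have hqP : q = P b := hPu b q hqpath
      rw [hb]
      exact ⟨hadj, by rw [← hqP, hq]; simp [Walk.length_cons]⟩
  · exact fun v hv => (step v hv).1
  · intro v hv
    have := (step v hv).2
    show (P ((P v).getVert 1)).length < (P v).length
    omega
  · intro v w hvw
    have hPr : P r = Walk.nil := (Walk.isPath_iff_eq_nil (p := P r)).mp (hP r)
    by_cases hv : v ∈ (P w).support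
    · -- then w ≠ r and v = par w
      have hwr : w ≠ r := by
        rintro rfl
        rw [hPr] at hv
        simp only [Walk.support_nil, List.mem_singleton] at hv
        exact G.irrefl (hv ▸ hvw)
      right
      refine ⟨hwr, ?_⟩
      set d := (P w).dropUntil v hv with hd
      have hdpath : d.IsPath := (hP w).dropUntil hv
      have hdP : d = P v := hPu v d hdpath
      have hwd : w ∉ d.support := by
        intro hwmem
        have hspec := (P w).take_spec hv
        have hnodup := (hP w).support_nodup
        rw [← hspec, Walk.support_append] at hnodup
        have hwtake : w ∈ ((P w).takeUntil v hv).support := Walk.start_mem_support _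
        have : w ∈ d.support.tail := by
          rw [Walk.support_eq_cons d, List.mem_cons] at hwmem
          rcases hwmem with rfl | h
          · exact absurd rfl (G.ne_of_adj hvw)
          · exact h
        exact (List.disjoint_of_nodup_append hnodup) hwtake this
      have hcons : (Walk.cons hvw.symm d).IsPath := by
        rw [Walk.cons_isPath_iff]; exact ⟨hdpath, hwd⟩
      have : Walk.cons hvw.symm d = P w := hPu w _ hcons
      show v = (P w).getVert 1
      rw [← this]
      simp [Walk.getVert_cons_succ]
    · -- then v ≠ r and w = par v
      left
      have hcons : (Walk.cons hvw (P w)).IsPath := by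
        rw [Walk.cons_isPath_iff]; exact ⟨hP w, hv⟩
      have hthis : Walk.cons hvw (P w) = P v := hPu v _ hcons
      have hvr : v ≠ r := by
        intro h
        subst h
        rw [hPr] at hthis
        have := congrArg Walk.length hthis
        simp [Walk.length_cons] at this
      refine ⟨hvr, ?_⟩
      show w = (P v).getVert 1
      rw [← hthis]
      simp [Walk.getVert_cons_succ]

variable {β : Type*}

/-- The "comb": layers copies of `A` at every `β`, plus a spine copy of `B` at `a₀`. -/
def combGraph (A : SimpleGraph α) (B : SimpleGraph β) (a₀ : α) : SimpleGraph (α × β) where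
  Adj p q := (p.2 = q.2 ∧ A.Adj p.1 q.1) ∨ (p.1 = q.1 ∧ p.1 = a₀ ∧ B.Adj p.2 q.2)
  symm := by
    constructor
    rintro p q (⟨h1, h2⟩ | ⟨h1, h2, h3⟩)
    · exact Or.inl ⟨h1.symm, h2.symm⟩
    · exact Or.inr ⟨h1.symm, h1 ▸ h2, h3.symm⟩
  loopless := by
    constructor
    rintro p (⟨_, h⟩ | ⟨_, _, h⟩)
    · exact A.irrefl h
    · exact B.irrefl h

lemma combGraph_isTree [Fintype α] [Fintype β] {A : SimpleGraph α} {B : SimpleGraph β}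
    (hA : A.IsTree) (hB : B.IsTree) (a₀ : α) : (combGraph A B a₀).IsTree := by
  classical
  obtain ⟨b₀⟩ : Nonempty β := hB.isConnected.nonempty
  obtain ⟨parA, htA, hA1, hA2, hA3⟩ := exists_parent hA a₀
  obtain ⟨parB, htB, hB1, hB2, hB3⟩ := exists_parent hB b₀
  set K : ℕ := (Finset.univ.sup htA) + 1 with hK
  have hKlt : ∀ x : α, htA x < K := fun x =>
    Nat.lt_succ_of_le (Finset.le_sup (Finset.mem_univ x))
  refine isTree_of_parent _ (a₀, b₀)
    (fun p => if p.1 = a₀ then (a₀, parB p.2) else (parA p.1, p.2))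
    (fun p => htA p.1 + K * htB p.2) ?_ ?_ ?_
  · rintro ⟨x, b⟩ hp
    beta_reduce
    by_cases hx : x = a₀
    · subst hx
      have hb : b ≠ b₀ := fun h => hp (by rw [h])
      rw [if_pos rfl]
      exact Or.inr ⟨rfl, rfl, hB1 b hb⟩
    · rw [if_neg hx]
      exact Or.inl ⟨rfl, hA1 x hx⟩
  · rintro ⟨x, b⟩ hp
    beta_reduce
    by_cases hx : x = a₀
    · subst hx
      have hb : b ≠ b₀ := fun h => hp (by rw [h])
      rw [if_pos rfl]
      have := hB2 b hb
      have h3 : K * htB (parB b) < K * htB b :=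
        Nat.mul_lt_mul_of_pos_left this (by omega)
      dsimp only
      omega
    · rw [if_neg hx]
      have := hA2 x hx
      dsimp only
      omega
  · rintro ⟨x, b⟩ ⟨y, b'⟩ (⟨heq, hadj⟩ | ⟨heq, heq0, hadj⟩) <;> beta_reduce
    · -- layer edge
      dsimp only at heq hadj
      subst heq
      rcases hA3 x y hadj with ⟨hxr, hpar⟩ | ⟨hyr, hpar⟩
      · left
        constructor
        · intro h
          exact hxr (congrArg Prod.fst h)
        · rw [if_neg hxr]
          rw [← hpar]
      · right
        constructor
        · intro h
          exact hyr (congrArg Prod.fst h)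
        · rw [if_neg hyr]
          rw [← hpar]
    · -- spine edge
      dsimp only at heq heq0 hadj
      subst heq
      subst heq0
      rcases hB3 b b' hadj with ⟨hbr, hpar⟩ | ⟨hbr, hpar⟩
      · exact Or.inl ⟨fun h => hbr (congrArg Prod.snd h),
          by simp [hpar]⟩
      · exact Or.inr ⟨fun h => hbr (congrArg Prod.snd h),
          by simp [hpar]⟩

lemma isTree_of_iso {G : SimpleGraph α} {H : SimpleGraph β} (e : G ≃g H) (hG : G.IsTree) :
    H.IsTree := by
  refine ⟨(e.connected_iff).mp hG.isConnected, ?_⟩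
  intro v c hc
  exact hG.IsAcyclic (c.map e.symm.toHom)
    ((Walk.map_isCycle_iff_of_injective e.symm.toEquiv.injective).mpr hc)

section ProdSub

variable {V W : Type*} {G : SimpleGraph V} {H : SimpleGraph W}

/-- The comb-shaped subgraph of the strong product supported on `T.verts ×ˢ S.verts`. -/
def prodSub (T : G.Subgraph) (S : H.Subgraph) (v0 : V) (hv0 : v0 ∈ T.verts) :
    (strongProd G H).Subgraph where
  verts := T.verts ×ˢ S.verts
  Adj p q := (p.2 = q.2 ∧ p.2 ∈ S.verts ∧ T.Adj p.1 q.1) ∨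
    (p.1 = q.1 ∧ p.1 = v0 ∧ S.Adj p.2 q.2)
  adj_sub := by
    rintro p q (⟨h1, h2, h3⟩ | ⟨h1, h2, h3⟩)
    · exact Or.inr (Or.inl ⟨h1, T.adj_sub h3⟩)
    · exact Or.inl ⟨h1, S.adj_sub h3⟩
  edge_vert := by
    rintro p q (⟨h1, h2, h3⟩ | ⟨h1, h2, h3⟩)
    · exact ⟨T.edge_vert h3, h2⟩
    · exact ⟨h2 ▸ hv0, S.edge_vert h3⟩
  symm := by
    constructor
    rintro p q (⟨h1, h2, h3⟩ | ⟨h1, h2, h3⟩)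
    · exact Or.inl ⟨h1.symm, h1 ▸ h2, T.adj_symm h3⟩
    · exact Or.inr ⟨h1.symm, h1 ▸ h2, S.adj_symm h3⟩

lemma prodSub_isTree [Fintype V] [Fintype W] {T : G.Subgraph} {S : H.Subgraph}
    (hT : T.coe.IsTree) (hS : S.coe.IsTree) (v0 : V) (hv0 : v0 ∈ T.verts) :
    (prodSub T S v0 hv0).coe.IsTree := by
  classical
  refine isTree_of_iso ?_ (combGraph_isTree hT hS (⟨v0, hv0⟩ : ↥T.verts))
  refine ⟨⟨fun p => ⟨(p.1.1, p.2.1), ⟨p.1.2, p.2.2⟩⟩,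
    fun p => (⟨p.1.1, p.2.1⟩, ⟨p.1.2, p.2.2⟩), fun p => rfl, fun p => rfl⟩, ?_⟩
  rintro ⟨⟨x, hx⟩, ⟨w, hw⟩⟩ ⟨⟨y, hy⟩, ⟨w', hw'⟩⟩
  simp only [Equiv.coe_fn_mk, Subgraph.coe_adj]
  constructor
  · rintro (⟨h1, h2, h3⟩ | ⟨h1, h2, h3⟩)
    · exact Or.inl ⟨Subtype.ext h1, h3⟩
    · exact Or.inr ⟨Subtype.ext h1, Subtype.ext h2, h3⟩
  · rintro (⟨h1, h3⟩ | ⟨h1, h2, h3⟩)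
    · exact Or.inl ⟨congrArg Subtype.val h1, hw, h3⟩
    · exact Or.inr ⟨congrArg Subtype.val h1, congrArg Subtype.val h2, h3⟩

end ProdSub

section Main

variable {V W : Type*} {G : SimpleGraph V} {H : SimpleGraph W}

lemma oddMinor_strongProd [Fintype V] [Fintype W] {s t : ℕ}
    (hG : IsOddMinorOf (⊤ : SimpleGraph (Fin s)) G)
    (hH : IsOddMinorOf (⊤ : SimpleGraph (Fin t)) H) :
    IsOddMinorOf (⊤ : SimpleGraph (Fin s × Fin t)) (strongProd G H) := by
  classical
  obtain ⟨T, c, hTt, hTd, hTc, hTe⟩ := hG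
  obtain ⟨S, d, hSt, hSd, hSc, hSe⟩ := hH
  have hT0 : ∀ i, ∃ x, x ∈ (T i).verts := fun i =>
    ((hTt i).isConnected.nonempty).elim fun x => ⟨x.1, x.2⟩
  choose v0 hv0 using hT0
  have hS0 : ∀ j, ∃ x, x ∈ (S j).verts := fun j =>
    ((hSt j).isConnected.nonempty).elim fun x => ⟨x.1, x.2⟩
  choose w0 hw0 using hS0
  refine ⟨fun k => prodSub (T k.1) (S k.2) (v0 k.1) (hv0 k.1), fun p => c p.1 + d p.2,
    ?_, ?_, ?_, ?_⟩
  · exact fun k => prodSub_isTree (hTt k.1) (hSt k.2) _ _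
  · -- disjointness
    rintro ⟨i, j⟩ ⟨i', j'⟩ hk
    rw [Set.disjoint_left]
    rintro ⟨v, w⟩ ⟨hvT, hwS⟩ ⟨hvT', hwS'⟩
    rcases eq_or_ne i i' with rfl | hii
    · rcases eq_or_ne j j' with rfl | hjj
      · exact hk rfl
      · exact Set.disjoint_left.mp (hSd hjj) hwS hwS'
    · exact Set.disjoint_left.mp (hTd hii) hvT hvT'
  · -- proper colouring on trees
    rintro ⟨i, j⟩ ⟨v, w⟩ ⟨v', w'⟩ (⟨h1, h2, h3⟩ | ⟨h1, h2, h3⟩)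
    · dsimp only at h1 ⊢
      subst h1
      intro hcd
      exact hTc i v v' h3 (by
        have := add_right_cancel hcd
        exact this)
    · dsimp only at h1 ⊢
      subst h1
      intro hcd
      exact hSc j w w' h3 (add_left_cancel hcd)
  · -- edges between branch sets
    rintro ⟨i, j⟩ ⟨i', j'⟩ hk
    rw [top_adj] at hk
    rcases eq_or_ne i i' with rfl | hii
    · have hjj : j ≠ j' := fun h => hk (by rw [h])
      obtain ⟨w, w', hw, hw', hadj, hd⟩ := hSe j j' (by rwa [top_adj])
      exact ⟨(v0 i, w), (v0 i, w'), ⟨hv0 i, hw⟩, ⟨hv0 i, hw'⟩,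
        Or.inl ⟨rfl, hadj⟩, by dsimp only; rw [hd]⟩
    · obtain ⟨x, y, hx, hy, hadj, hc⟩ := hTe i i' (by rwa [top_adj])
      rcases eq_or_ne j j' with rfl | hjj
      · exact ⟨(x, w0 j), (y, w0 j), ⟨hx, hw0 j⟩, ⟨hy, hw0 j⟩,
          Or.inr (Or.inl ⟨rfl, hadj⟩), by dsimp only; rw [hc]⟩
      · obtain ⟨w, w', hw, hw', hadjS, hd⟩ := hSe j j' (by rwa [top_adj])
        exact ⟨(x, w), (y, w'), ⟨hx, hw⟩, ⟨hy, hw'⟩,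
          Or.inr (Or.inr ⟨hadj, hadjS⟩), by dsimp only; rw [hc, hd]⟩

lemma oddMinor_reindex {A B : Type*} (e : A ≃ B)
    (h : IsOddMinorOf (⊤ : SimpleGraph B) G) : IsOddMinorOf (⊤ : SimpleGraph A) G := by
  obtain ⟨T, c, h1, h2, h3, h4⟩ := h
  refine ⟨fun a => T (e a), c, fun a => h1 (e a), ?_, fun a => h3 (e a), ?_⟩
  · exact fun a a' ha => h2 (e.injective.ne ha)
  · intro a a' ha
    rw [top_adj] at ha
    exact h4 (e a) (e a') (by rw [top_adj]; exact e.injective.ne ha)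

lemma oddMinor_bddAbove [Fintype V] (G : SimpleGraph V) :
    BddAbove {r : ℕ | IsOddMinorOf (⊤ : SimpleGraph (Fin r)) G} := by
  classical
  refine ⟨Fintype.card V, ?_⟩
  rintro r ⟨T, c, h1, h2, -, -⟩
  have hT0 : ∀ i, ∃ x, x ∈ (T i).verts := fun i =>
    ((h1 i).isConnected.nonempty).elim fun x => ⟨x.1, x.2⟩
  choose f hf using hT0
  have hinj : Function.Injective f := by
    intro i i' hii
    by_contra hne
    exact Set.disjoint_left.mp (h2 hne) (hf i) (hii ▸ hf i')
  simpa using Fintype.card_le_of_injective f hinj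

lemma oddMinor_zero_mem (G : SimpleGraph V) :
    IsOddMinorOf (⊤ : SimpleGraph (Fin 0)) G :=
  ⟨fun i => i.elim0, fun _ => 0, fun i => i.elim0, fun i => i.elim0,
    fun i => i.elim0, fun i => i.elim0⟩

end Main

end OddHadwigerAux

open OddHadwigerAux in
theorem stmt_3 {V W : Type*} [Fintype V] [Fintype W]
    (G : SimpleGraph V) (H : SimpleGraph W) (s t : ℕ)
    (hs : oddHadwiger G = s) (hs2 : 2 ≤ s)
    (ht : oddHadwiger H = t) (ht2 : 2 ≤ t) :
    oddHadwiger (strongProd G H) ≥ s * t := by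
    classical
  have hsmem : IsOddMinorOf (⊤ : SimpleGraph (Fin s)) G := by
    have h := Nat.sSup_mem ⟨0, oddMinor_zero_mem G⟩ (oddMinor_bddAbove G)
    unfold oddHadwiger at hs
    rwa [hs] at h
  have htmem : IsOddMinorOf (⊤ : SimpleGraph (Fin t)) H := by
    have h := Nat.sSup_mem ⟨0, oddMinor_zero_mem H⟩ (oddMinor_bddAbove H)
    unfold oddHadwiger at ht
    rwa [ht] at h
  have hst : IsOddMinorOf (⊤ : SimpleGraph (Fin (s * t))) (strongProd G H) :=
    oddMinor_reindex finProdFinEquiv.symm (oddMinor_strongProd hsmem htmem)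
  exact le_csSup (oddMinor_bddAbove _) hst
end

section
/- Let G and H be (finite, nonempty) graphs with maximum degrees Δ(G) and Δ(H). If Δ(G) = Δ(H), then the odd Hadwiger number of the strong product satisfies oh(G ⊠ H) ≥ Δ(G) + 1; if Δ(G) ≠ Δ(H), then oh(G ⊠ H) ≥ min{Δ(G), Δ(H)} + 2. -/
open SimpleGraph

section Helpers

variable {X : Type*}

lemma isTree_single (P : SimpleGraph X) (a : X) (hall : ∀ x, x = a)
    (hadj : ∀ x y, ¬ P.Adj x y) : P.IsTree := by
  constructor
  · haveI : Nonempty X := ⟨a⟩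
    exact ⟨fun u v => by rw [hall u, hall v]⟩
  · intro v w hw
    cases w with
    | nil => have := hw.three_le_length; simp at this
    | cons ha p => exact hadj _ _ ha

lemma isTree_path3 {P : SimpleGraph X} {a b c : X}
    (hab : a ≠ b) (hbc : b ≠ c) (hac : a ≠ c)
    (hall : ∀ x, x = a ∨ x = b ∨ x = c)
    (hadj : ∀ x y, P.Adj x y ↔
      (x = a ∧ y = b) ∨ (x = b ∧ y = a) ∨ (x = b ∧ y = c) ∨ (x = c ∧ y = b)) :
    P.IsTree := by
  classical
  have pab : P.Adj a b := (hadj a b).2 (Or.inl ⟨rfl, rfl⟩)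
  have pbc : P.Adj b c := (hadj b c).2 (Or.inr (Or.inr (Or.inl ⟨rfl, rfl⟩)))
  constructor
  · have key : ∀ x, P.Reachable x b := by
      intro x
      rcases hall x with rfl | rfl | rfl
      · exact pab.reachable
      · exact SimpleGraph.Reachable.refl _
      · exact pbc.symm.reachable
    haveI : Nonempty X := ⟨a⟩
    exact ⟨fun u v => (key u).trans (key v).symm⟩
  · intro v w hw
    have hlen := hw.three_le_length
    have hnodup : w.edges.Nodup := hw.edges_nodup
    have hsub : ∀ e ∈ w.edges, e = s(a, b) ∨ e = s(b, c) := by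
      intro e he
      have hmem : e ∈ P.edgeSet := w.edges_subset_edgeSet he
      induction e with
      | _ x y =>
        rw [SimpleGraph.mem_edgeSet, hadj] at hmem
        rcases hmem with ⟨rfl, rfl⟩ | ⟨rfl, rfl⟩ | ⟨rfl, rfl⟩ | ⟨rfl, rfl⟩
        · exact Or.inl rfl
        · exact Or.inl (Sym2.eq_swap)
        · exact Or.inr rfl
        · exact Or.inr (Sym2.eq_swap)
    have hcard : w.edges.toFinset.card ≤ 2 := by
      have hss : w.edges.toFinset ⊆ {s(a, b), s(b, c)} := by
        intro e he
        rw [List.mem_toFinset] at he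
        rcases hsub e he with rfl | rfl <;> simp
      calc w.edges.toFinset.card ≤ ({s(a, b), s(b, c)} : Finset _).card :=
            Finset.card_le_card hss
        _ ≤ 2 := Finset.card_insert_le _ _ |>.trans (by simp)
    rw [List.toFinset_card_of_nodup hnodup, SimpleGraph.Walk.length_edges] at hcard
    omega

/-- The single-vertex subgraph with no edges. -/
def singleSubgraph (Gr : SimpleGraph X) (a : X) : Gr.Subgraph where
  verts := {a}
  Adj _ _ := False
  adj_sub h := h.elim
  edge_vert h := h.elim
  symm := ⟨fun _ _ h => h.elim⟩

lemma singleSubgraph_isTree (Gr : SimpleGraph X) (a : X) :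
    (singleSubgraph Gr a).coe.IsTree := by
  apply isTree_single _ (⟨a, rfl⟩ : ↥(singleSubgraph Gr a).verts)
  · rintro ⟨x, hx⟩
    exact Subtype.ext hx
  · intro x y h
    exact h

/-- The path subgraph on three vertices `a - b - c`. -/
def pathSubgraph (Gr : SimpleGraph X) (a b c : X) (h1 : Gr.Adj a b) (h2 : Gr.Adj b c) :
    Gr.Subgraph where
  verts := {a, b, c}
  Adj x y := (x = a ∧ y = b) ∨ (x = b ∧ y = a) ∨ (x = b ∧ y = c) ∨ (x = c ∧ y = b)
  adj_sub := by
    rintro x y (⟨rfl, rfl⟩ | ⟨rfl, rfl⟩ | ⟨rfl, rfl⟩ | ⟨rfl, rfl⟩)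
    · exact h1
    · exact h1.symm
    · exact h2
    · exact h2.symm
  edge_vert := by
    rintro x y (⟨rfl, _⟩ | ⟨rfl, _⟩ | ⟨rfl, _⟩ | ⟨rfl, _⟩) <;> simp [Set.mem_insert_iff]
  symm := by
    constructor
    rintro x y (⟨rfl, rfl⟩ | ⟨rfl, rfl⟩ | ⟨rfl, rfl⟩ | ⟨rfl, rfl⟩) <;> tauto

lemma pathSubgraph_isTree (Gr : SimpleGraph X) (a b c : X) (h1 : Gr.Adj a b) (h2 : Gr.Adj b c)
    (hab : a ≠ b) (hbc : b ≠ c) (hac : a ≠ c) :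
    (pathSubgraph Gr a b c h1 h2).coe.IsTree := by
  have hma : a ∈ (pathSubgraph Gr a b c h1 h2).verts := Or.inl rfl
  have hmb : b ∈ (pathSubgraph Gr a b c h1 h2).verts := Or.inr (Or.inl rfl)
  have hmc : c ∈ (pathSubgraph Gr a b c h1 h2).verts := Or.inr (Or.inr rfl)
  apply isTree_path3 (a := ⟨a, hma⟩) (b := ⟨b, hmb⟩) (c := ⟨c, hmc⟩)
  · exact fun h => hab (congrArg Subtype.val h)
  · exact fun h => hbc (congrArg Subtype.val h)
  · exact fun h => hac (congrArg Subtype.val h)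
  · rintro ⟨x, hx⟩
    rcases hx with rfl | rfl | rfl
    · exact Or.inl rfl
    · exact Or.inr (Or.inl rfl)
    · exact Or.inr (Or.inr rfl)
  · intro x y
    rw [SimpleGraph.Subgraph.coe_adj]
    show (↑x = a ∧ ↑y = b) ∨ _ ∨ _ ∨ _ ↔ _
    simp only [Subtype.ext_iff]

lemma odd_minor_reindex {V A B : Type*} {G : SimpleGraph V} (e : B ≃ A)
    (hm : IsOddMinorOf (⊤ : SimpleGraph A) G) : IsOddMinorOf (⊤ : SimpleGraph B) G := by
  obtain ⟨T, c, h1, h2, h3, h4⟩ := hm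
  refine ⟨fun b => T (e b), c, fun b => h1 (e b), ?_, fun b => h3 (e b), ?_⟩
  · intro b b' hbb'
    exact h2 (e.injective.ne hbb')
  · intro b b' hadj
    rw [SimpleGraph.top_adj] at hadj
    exact h4 (e b) (e b') ((SimpleGraph.top_adj _ _).2 (e.injective.ne hadj))

lemma odd_minor_card_bound {V : Type*} [Fintype V] {G : SimpleGraph V} {r : ℕ}
    (hm : IsOddMinorOf (⊤ : SimpleGraph (Fin r)) G) : r ≤ Fintype.card V := by
  obtain ⟨T, c, h1, h2, _, _⟩ := hm
  have hex : ∀ w : Fin r, ∃ x, x ∈ (T w).verts := by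
    intro w
    obtain ⟨⟨x, hx⟩⟩ := (h1 w).isConnected.nonempty
    exact ⟨x, hx⟩
  choose f hf using hex
  have hinj : Function.Injective f := by
    intro w w' hww'
    by_contra hne
    exact Set.disjoint_left.1 (h2 hne) (hf w) (hww' ▸ hf w')
  simpa using Fintype.card_le_of_injective f hinj

lemma oddHadwiger_bddAbove {V : Type*} [Fintype V] (G : SimpleGraph V) :
    BddAbove {r : ℕ | IsOddMinorOf (⊤ : SimpleGraph (Fin r)) G} :=
  ⟨Fintype.card V, fun _ hr => odd_minor_card_bound hr⟩

end Helpers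

lemma strong_key {V W : Type*} (G : SimpleGraph V) (H : SimpleGraph W)
    (g : V) (h : W) {m k : ℕ} (gs : Fin m → V) (hs : Fin m → W) (p : Fin k → V × W)
    (adjg : ∀ i, G.Adj g (gs i)) (adjh : ∀ i, H.Adj h (hs i))
    (injg : Function.Injective gs) (injh : Function.Injective hs)
    (pinj : Function.Injective p)
    (padj : ∀ j j', j ≠ j' → (strongProd G H).Adj (p j) (p j'))
    (pc : ∀ j, (p j).1 = g ∨ (p j).2 = h)
    (pt1 : ∀ j i, p j ≠ (gs i, h)) (pt2 : ∀ j i, p j ≠ (gs i, hs i))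
    (pt3 : ∀ j i, p j ≠ (g, hs i))
    (pedge : ∀ i j, (strongProd G H).Adj (gs i, h) (p j) ∨
      (strongProd G H).Adj (g, hs i) (p j)) :
    IsOddMinorOf (⊤ : SimpleGraph (Fin m ⊕ Fin k)) (strongProd G H) := by
  classical
  have hgne : ∀ i, g ≠ gs i := fun i => (adjg i).ne
  have hhne : ∀ i, h ≠ hs i := fun i => (adjh i).ne
  have e1 : ∀ i, (strongProd G H).Adj (gs i, h) (gs i, hs i) := fun i => Or.inl ⟨rfl, adjh i⟩
  have e2 : ∀ i, (strongProd G H).Adj (gs i, hs i) (g, hs i) :=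
    fun i => Or.inr (Or.inl ⟨rfl, (adjg i).symm⟩)
  set c : V × W → Fin 2 := fun x => if x.1 = g ∨ x.2 = h then 0 else 1 with hc
  have c1 : ∀ i, c (gs i, h) = 0 := fun i => if_pos (Or.inr rfl)
  have c2 : ∀ i, c (gs i, hs i) = 1 := by
    intro i
    refine if_neg ?_
    rintro (e | e)
    · exact hgne i e.symm
    · exact hhne i e.symm
  have c3 : ∀ i, c (g, hs i) = 0 := fun i => if_pos (Or.inl rfl)
  have c4 : ∀ j, c (p j) = 0 := fun j => if_pos (pc j)
  refine ⟨Sum.elim (fun i => pathSubgraph (strongProd G H) (gs i, h) (gs i, hs i) (g, hs i)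
      (e1 i) (e2 i)) (fun j => singleSubgraph (strongProd G H) (p j)), c, ?_, ?_, ?_, ?_⟩
  · rintro (i | j)
    · refine pathSubgraph_isTree _ _ _ _ (e1 i) (e2 i) ?_ ?_ ?_
      · intro e; exact hhne i (congrArg Prod.snd e)
      · intro e; exact hgne i (congrArg Prod.fst e).symm
      · intro e; exact hgne i (congrArg Prod.fst e).symm
    · exact singleSubgraph_isTree _ _
  · rintro (i | j) (i' | j') hne <;>
      rw [Set.disjoint_left] <;> intro x hx hx' <;>
      simp only [Sum.elim_inl, Sum.elim_inr, pathSubgraph, singleSubgraph,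
        Set.mem_insert_iff, Set.mem_singleton_iff] at hx hx'
    · have hii' : i ≠ i' := fun e => hne (by rw [e])
      have hga : gs i ≠ gs i' := injg.ne hii'
      have hsa : hs i ≠ hs i' := injh.ne hii'
      rcases hx with rfl | rfl | rfl <;> rcases hx' with h' | h' | h' <;>
        rw [Prod.mk.injEq] at h' <;>
        first
          | exact hga h'.1
          | exact hsa h'.2
          | exact hhne i' h'.2
          | exact hgne i h'.1.symm
          | exact hhne i h'.2.symm
    · rcases hx with rfl | rfl | rfl
      · exact pt1 j' i hx'.symm
      · exact pt2 j' i hx'.symm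
      · exact pt3 j' i hx'.symm
    · subst hx
      rcases hx' with h' | h' | h'
      · exact pt1 j i' h'
      · exact pt2 j i' h'
      · exact pt3 j i' h'
    · have hjj' : j ≠ j' := fun e => hne (by rw [e])
      subst hx
      exact pinj.ne hjj' hx'
  · rintro (i | j) x y hxy
    · rcases hxy with ⟨rfl, rfl⟩ | ⟨rfl, rfl⟩ | ⟨rfl, rfl⟩ | ⟨rfl, rfl⟩
      · rw [c1, c2]; decide
      · rw [c2, c1]; decide
      · rw [c2, c3]; decide
      · rw [c3, c2]; decide
    · exact hxy.elim
  · rintro (i | j) (i' | j') hne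
    · exact ⟨(gs i, h), (g, hs i'),
        Or.inl rfl, Or.inr (Or.inr rfl),
        Or.inr (Or.inr ⟨(adjg i).symm, adjh i'⟩), by rw [c1, c3]⟩
    · rcases pedge i j' with hA | hA
      · exact ⟨(gs i, h), p j', Or.inl rfl, rfl, hA, by rw [c1, c4]⟩
      · exact ⟨(g, hs i), p j', Or.inr (Or.inr rfl), rfl, hA, by rw [c3, c4]⟩
    · rcases pedge i' j with hA | hA
      · exact ⟨p j, (gs i', h), rfl, Or.inl rfl, hA.symm, by rw [c1, c4]⟩
      · exact ⟨p j, (g, hs i'), rfl, Or.inr (Or.inr rfl), hA.symm, by rw [c3, c4]⟩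
    · have hjj' : j ≠ j' := fun e => hne (by rw [e])
      exact ⟨p j, p j', rfl, rfl, padj j j' hjj', by rw [c4, c4]⟩

theorem stmt_6 {V W : Type*} [Fintype V] [Fintype W] [Nonempty V] [Nonempty W]
    (G : SimpleGraph V) (H : SimpleGraph W)
    [DecidableRel G.Adj] [DecidableRel H.Adj] :
    (G.maxDegree = H.maxDegree → oddHadwiger (strongProd G H) ≥ G.maxDegree + 1) ∧
    (G.maxDegree ≠ H.maxDegree →
      oddHadwiger (strongProd G H) ≥ min G.maxDegree H.maxDegree + 2) := by
  classical
  obtain ⟨g, hg⟩ := G.exists_maximal_degree_vertex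
  obtain ⟨h, hh⟩ := H.exists_maximal_degree_vertex
  have cg : Fintype.card (G.neighborSet g) = G.maxDegree := by
    rw [hg]; exact G.card_neighborSet_eq_degree g
  have ch : Fintype.card (H.neighborSet h) = H.maxDegree := by
    rw [hh]; exact H.card_neighborSet_eq_degree h
  have eg := (Fintype.equivFinOfCardEq cg).symm
  have eh := (Fintype.equivFinOfCardEq ch).symm
  obtain ⟨gf, gfadj, gfinj⟩ :
      ∃ gf : Fin G.maxDegree → V, (∀ i, G.Adj g (gf i)) ∧ Function.Injective gf :=
    ⟨fun i => (eg i).1, fun i => (eg i).2, fun i i' e => eg.injective (Subtype.ext e)⟩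
  obtain ⟨hf, hfadj, hfinj⟩ :
      ∃ hf : Fin H.maxDegree → W, (∀ i, H.Adj h (hf i)) ∧ Function.Injective hf :=
    ⟨fun i => (eh i).1, fun i => (eh i).2, fun i i' e => eh.injective (Subtype.ext e)⟩
  have two01 : ∀ j : Fin 2, j = 0 ∨ j = 1 := by decide
  constructor
  · intro heq
    have hkey := strong_key G H g h (gs := gf) (hs := fun i => hf (finCongr heq i))
      (p := fun _ : Fin 1 => (g, h)) gfadj (fun i => hfadj _) gfinj
      (fun i i' e => (finCongr heq).injective (hfinj e))
      (fun a b _ => Subsingleton.elim a b)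
      (fun j j' hj => absurd (Subsingleton.elim j j') hj)
      (fun _ => Or.inl rfl)
      (fun j i e => (gfadj i).ne (congrArg Prod.fst e))
      (fun j i e => (gfadj i).ne (congrArg Prod.fst e))
      (fun j i e => (hfadj _).ne (congrArg Prod.snd e))
      (fun i j => Or.inl (Or.inr (Or.inl ⟨rfl, (gfadj i).symm⟩)))
    have hmem : IsOddMinorOf (⊤ : SimpleGraph (Fin (G.maxDegree + 1))) (strongProd G H) :=
      odd_minor_reindex finSumFinEquiv.symm hkey
    exact le_csSup (oddHadwiger_bddAbove _) hmem
  · intro hne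
    rcases lt_or_gt_of_ne hne with hlt | hgt
    · -- G.maxDegree < H.maxDegree
      have hwadj : H.Adj h (hf ⟨G.maxDegree, hlt⟩) := hfadj _
      have hkey := strong_key G H g h (m := G.maxDegree) (gs := gf)
        (hs := fun i => hf (Fin.castLE hlt.le i))
        (p := fun j : Fin 2 => (g, if j = 0 then h else hf ⟨G.maxDegree, hlt⟩))
        gfadj (fun i => hfadj _) gfinj
        (fun i i' e => by
          have hv := congrArg Fin.val (hfinj e)
          exact Fin.ext (by simpa using hv))
        (by
          intro j j' e
          rcases two01 j with rfl | rfl <;> rcases two01 j' with rfl | rfl <;> try rfl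
          · exact absurd (congrArg Prod.snd e) (by simpa using hwadj.ne)
          · exact absurd (congrArg Prod.snd e).symm (by simpa using hwadj.ne))
        (by
          intro j j' hjj'
          rcases two01 j with rfl | rfl <;> rcases two01 j' with rfl | rfl <;>
            first
              | exact absurd rfl hjj'
              | (simp only [if_pos, if_neg, reduceIte]
                 first
                   | exact Or.inl ⟨rfl, hwadj⟩
                   | exact Or.inl ⟨rfl, hwadj.symm⟩))
        (fun j => Or.inl rfl)
        (by
          intro j i e
          rcases two01 j with rfl | rfl <;>
            exact (gfadj i).ne (congrArg Prod.fst e))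
        (by
          intro j i e
          rcases two01 j with rfl | rfl <;>
            exact (gfadj i).ne (congrArg Prod.fst e))
        (by
          intro j i e
          rcases two01 j with rfl | rfl
          · have := congrArg Prod.snd e
            simp only [reduceIte] at this
            exact (hfadj _).ne this
          · have := congrArg Prod.snd e
            simp only [reduceIte] at this
            have hv := congrArg Fin.val (hfinj this)
            simp at hv
            omega)
        (by
          intro i j
          rcases two01 j with rfl | rfl
          · refine Or.inl (Or.inr (Or.inl ⟨?_, (gfadj i).symm⟩))
            simp
          · refine Or.inl (Or.inr (Or.inr ⟨(gfadj i).symm, ?_⟩))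
            simpa using hwadj)
      have hmem : IsOddMinorOf (⊤ : SimpleGraph (Fin (G.maxDegree + 2))) (strongProd G H) :=
        odd_minor_reindex finSumFinEquiv.symm hkey
      rw [min_eq_left hlt.le]
      exact le_csSup (oddHadwiger_bddAbove _) hmem
    · -- H.maxDegree < G.maxDegree
      have hgadj : G.Adj g (gf ⟨H.maxDegree, hgt⟩) := gfadj _
      have hkey := strong_key G H g h (m := H.maxDegree)
        (gs := fun i => gf (Fin.castLE hgt.le i)) (hs := hf)
        (p := fun j : Fin 2 => (if j = 0 then g else gf ⟨H.maxDegree, hgt⟩, h))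
        (fun i => gfadj _) hfadj
        (fun i i' e => by
          have hv := congrArg Fin.val (gfinj e)
          exact Fin.ext (by simpa using hv))
        hfinj
        (by
          intro j j' e
          rcases two01 j with rfl | rfl <;> rcases two01 j' with rfl | rfl <;> try rfl
          · exact absurd (congrArg Prod.fst e) (by simpa using hgadj.ne)
          · exact absurd (congrArg Prod.fst e).symm (by simpa using hgadj.ne))
        (by
          intro j j' hjj'
          rcases two01 j with rfl | rfl <;> rcases two01 j' with rfl | rfl <;>
            first
              | exact absurd rfl hjj'
              | (simp only [reduceIte]
                 first
                   | exact Or.inr (Or.inl ⟨rfl, hgadj⟩)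
                   | exact Or.inr (Or.inl ⟨rfl, hgadj.symm⟩)))
        (fun j => Or.inr rfl)
        (by
          intro j i e
          rcases two01 j with rfl | rfl
          · have := congrArg Prod.fst e
            simp only [reduceIte] at this
            exact (gfadj _).ne this
          · have := congrArg Prod.fst e
            simp only [reduceIte] at this
            have hv := congrArg Fin.val (gfinj this)
            simp at hv
            omega)
        (by
          intro j i e
          rcases two01 j with rfl | rfl <;>
            exact (hfadj _).ne (congrArg Prod.snd e))
        (by
          intro j i e
          rcases two01 j with rfl | rfl <;>
            exact (hfadj _).ne (congrArg Prod.snd e))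
        (by
          intro i j
          rcases two01 j with rfl | rfl
          · refine Or.inr (Or.inl ⟨?_, (hfadj i).symm⟩)
            simp
          · refine Or.inr (Or.inr (Or.inr ⟨?_, (hfadj i).symm⟩))
            simpa using hgadj)
      have hmem : IsOddMinorOf (⊤ : SimpleGraph (Fin (H.maxDegree + 2))) (strongProd G H) :=
        odd_minor_reindex finSumFinEquiv.symm hkey
      rw [min_eq_right hgt.le]
      exact le_csSup (oddHadwiger_bddAbove _) hmem
end

section
/- For every integer t ≥ 6, the odd Hadwiger number of the direct product of the complete graphs K_t and K_3 satisfies oh(K_t × K_3) ≥ t + 2. -/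
open SimpleGraph

open SimpleGraph

private theorem isAcyclic_of_cover3 {V : Type*} {G : SimpleGraph V} (x y z : V)
    (hcov : ∀ v, v = x ∨ v = y ∨ v = z)
    (htri : ∀ a b c : V, G.Adj a b → G.Adj b c → G.Adj a c → False) : G.IsAcyclic := by
  intro v c hc
  have h3 : 3 ≤ c.length := hc.three_le_length
  have hnd : c.support.tail.Nodup := hc.support_nodup
  have hsub : c.support.tail ⊆ [x, y, z] := by
    intro a _
    rcases hcov a with h | h | h <;> simp [h]
  have hlen : c.support.tail.length ≤ 3 := by
    simpa using (List.subperm_of_subset hnd hsub).length_le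
  have hsup : c.support.length = c.length + 1 := c.length_support
  have htl : c.support.tail.length = c.support.length - 1 := c.support.length_tail
  have hlen3 : c.length = 3 := by omega
  cases c with
  | nil => simp at hlen3
  | cons h1 p =>
    cases p with
    | nil => simp at hlen3
    | cons h2 q =>
      cases q with
      | nil => simp at hlen3
      | cons h3' r =>
        have hr0 : r.length = 0 := by
          simp only [SimpleGraph.Walk.length_cons] at hlen3
          omega
        have := SimpleGraph.Walk.eq_of_length_eq_zero hr0
        subst this
        exact htri _ _ _ h1 h2 h3'.symm

private theorem no_tri_two_pairs {V : Type*} {u v w : V} (huv : u ≠ v) (hvw : v ≠ w)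
    (huw : u ≠ w) {R : V → V → Prop}
    (hR : ∀ a b, R a b → (a = u ∧ b = v) ∨ (a = v ∧ b = u) ∨ (a = v ∧ b = w) ∨ (a = w ∧ b = v))
    (a b c : V) (h1 : R a b) (h2 : R b c) (h3 : R a c) : False := by
  rcases hR _ _ h1 with ⟨rfl, rfl⟩ | ⟨rfl, rfl⟩ | ⟨rfl, rfl⟩ | ⟨rfl, rfl⟩ <;>
    rcases hR _ _ h2 with ⟨h2a, h2b⟩ | ⟨h2a, h2b⟩ | ⟨h2a, h2b⟩ | ⟨h2a, h2b⟩ <;>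
    rcases hR _ _ h3 with ⟨h3a, h3b⟩ | ⟨h3a, h3b⟩ | ⟨h3a, h3b⟩ | ⟨h3a, h3b⟩ <;>
    first | exact huv h2a.symm | exact huv h2a | exact hvw h2a.symm | exact hvw h2a | exact huw h2a.symm | exact huw h2a | (subst_vars; simp_all)

private theorem singleton_isTree {V : Type*} (G : SimpleGraph V) (v : V) :
    (G.singletonSubgraph v).coe.IsTree := by
  refine ⟨SimpleGraph.Subgraph.connected_iff'.mp (SimpleGraph.Subgraph.singletonSubgraph_connected (G := G)), ?_⟩
  intro a c hc
  have := hc.three_le_length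
  cases c with
  | nil => simp at this
  | cons h p =>
    have : (G.singletonSubgraph v).Adj _ _ := h
    simp [SimpleGraph.singletonSubgraph] at this

private theorem edge_isTree {V : Type*} {G : SimpleGraph V} {u v : V} (h : G.Adj u v) :
    (G.subgraphOfAdj h).coe.IsTree := by
  refine ⟨SimpleGraph.Subgraph.connected_iff'.mp (SimpleGraph.Subgraph.subgraphOfAdj_connected h), ?_⟩
  refine isAcyclic_of_cover3 ⟨u, by simp⟩ ⟨v, by simp⟩ ⟨v, by simp⟩ ?_ ?_
  · rintro ⟨a, ha⟩
    simp only [SimpleGraph.subgraphOfAdj_verts, Set.mem_insert_iff, Set.mem_singleton_iff] at ha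
    rcases ha with rfl | rfl <;> simp
  · rintro x y z h1 h2 h3
    have huv : u ≠ v := h.ne
    have hxy : (x : V) ≠ (y : V) := Subtype.coe_ne_coe.mpr h1.ne
    have hyz : (y : V) ≠ (z : V) := Subtype.coe_ne_coe.mpr h2.ne
    have hxz : (x : V) ≠ (z : V) := Subtype.coe_ne_coe.mpr h3.ne
    rw [SimpleGraph.Subgraph.coe_adj] at h1 h2 h3
    simp only [SimpleGraph.subgraphOfAdj_adj, Sym2.eq, Sym2.rel_iff', Prod.mk.injEq,
      Prod.swap_prod_mk] at h1 h2 h3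
    rcases h1 with ⟨e1, e2⟩ | ⟨e1, e2⟩ <;> rcases h2 with ⟨e3, e4⟩ | ⟨e3, e4⟩ <;> simp_all

private theorem path3_isTree {V : Type*} {G : SimpleGraph V} {u v w : V}
    (h1 : G.Adj u v) (h2 : G.Adj v w) (huw : u ≠ w) :
    (G.subgraphOfAdj h1 ⊔ G.subgraphOfAdj h2).coe.IsTree := by
  refine ⟨SimpleGraph.Subgraph.connected_iff'.mp ?_, ?_⟩
  · refine SimpleGraph.Subgraph.connected_sup (SimpleGraph.Subgraph.subgraphOfAdj_connected h1).preconnected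
      (SimpleGraph.Subgraph.subgraphOfAdj_connected h2).preconnected ⟨v, ?_⟩
    simp
  · refine isAcyclic_of_cover3 ⟨u, by simp⟩ ⟨v, by simp⟩ ⟨w, by simp⟩ ?_ ?_
    · rintro ⟨a, ha⟩
      simp only [SimpleGraph.Subgraph.verts_sup, SimpleGraph.subgraphOfAdj_verts,
        Set.mem_union, Set.mem_insert_iff, Set.mem_singleton_iff] at ha
      rcases ha with (rfl | rfl) | (rfl | rfl) <;> simp
    · rintro x y z hA hB hC
      rw [SimpleGraph.Subgraph.coe_adj] at hA hB hC
      refine no_tri_two_pairs h1.ne h2.ne huw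
        (R := fun p q => (G.subgraphOfAdj h1 ⊔ G.subgraphOfAdj h2).Adj p q)
        ?_ _ _ _ hA hB hC
      intro a b hab
      rw [SimpleGraph.Subgraph.sup_adj] at hab
      simp only [SimpleGraph.subgraphOfAdj_adj, Sym2.eq, Sym2.rel_iff', Prod.mk.injEq,
        Prod.swap_prod_mk] at hab
      tauto

namespace OddMinorConstruction

open SimpleGraph

private abbrev GP (t : ℕ) : SimpleGraph (Fin t × Fin 3) :=
  dirProd (⊤ : SimpleGraph (Fin t)) (⊤ : SimpleGraph (Fin 3))

private def mkv (t : ℕ) (x r : ℕ) (hx : x < t) (hr : r < 3) : Fin t × Fin 3 :=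
  (⟨x, hx⟩, ⟨r, hr⟩)

private lemma dirProd_adj {α β : Type*} {G : SimpleGraph α} {H : SimpleGraph β} {x y : α × β} :
    (dirProd G H).Adj x y ↔ G.Adj x.1 y.1 ∧ H.Adj x.2 y.2 := Iff.rfl

private lemma gadj {t x y r s : ℕ} {hx hy hr hs} (hxy : x ≠ y) (hrs : r ≠ s) :
    (GP t).Adj (mkv t x r hx hr) (mkv t y s hy hs) := by
  rw [dirProd_adj]
  refine ⟨?_, ?_⟩ <;> simp [mkv, Fin.ext_iff, hxy, hrs]

private def bcol (m n : ℕ) : ℕ := (if n + 2 < m then n + 2 else n + 2 - m) + 3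
private def ccol (m n : ℕ) : ℕ := (if n + 1 < m then n + 1 else n + 1 - m) + 3

private lemma bcol_lt {t n : ℕ} (ht : 6 ≤ t) (hn : n < t - 3) : bcol (t - 3) n < t := by
  unfold bcol; split <;> omega

private lemma ccol_lt {t n : ℕ} (ht : 6 ≤ t) (hn : n < t - 3) : ccol (t - 3) n < t := by
  unfold ccol; split <;> omega

private def big (t : ℕ) (ht : 6 ≤ t) (n : ℕ) (hn : n < t - 3) : (GP t).Subgraph :=
  SimpleGraph.subgraphOfAdj _
    (gadj (hx := by omega) (hy := bcol_lt ht hn) (hr := by omega) (hs := by omega)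
      (x := n + 3) (y := bcol (t - 3) n) (r := 0) (s := 1)
      (by unfold bcol; split <;> omega) (by omega)) ⊔
  SimpleGraph.subgraphOfAdj _
    (gadj (hx := bcol_lt ht hn) (hy := ccol_lt ht hn) (hr := by omega) (hs := by omega)
      (x := bcol (t - 3) n) (y := ccol (t - 3) n) (r := 1) (s := 2)
      (by unfold bcol ccol; split <;> split <;> omega) (by omega))

private def tA (t : ℕ) (ht : 6 ≤ t) : (GP t).Subgraph :=
  SimpleGraph.subgraphOfAdj _
    (gadj (x := 0) (y := 1) (r := 0) (s := 1)
      (hx := by omega) (hy := by omega) (hr := by omega) (hs := by omega)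
      (by omega) (by omega))

private def tB (t : ℕ) (ht : 6 ≤ t) : (GP t).Subgraph :=
  SimpleGraph.subgraphOfAdj _
    (gadj (x := 0) (y := 1) (r := 1) (s := 2)
      (hx := by omega) (hy := by omega) (hr := by omega) (hs := by omega)
      (by omega) (by omega))

private def tC (t : ℕ) (ht : 6 ≤ t) : (GP t).Subgraph :=
  SimpleGraph.subgraphOfAdj _
    (gadj (x := 0) (y := 2) (r := 2) (s := 0)
      (hx := by omega) (hy := by omega) (hr := by omega) (hs := by omega)
      (by omega) (by omega))

private def tD (t : ℕ) (ht : 6 ≤ t) : (GP t).Subgraph :=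
  SimpleGraph.subgraphOfAdj _
    (gadj (x := 1) (y := 2) (r := 0) (s := 2)
      (hx := by omega) (hy := by omega) (hr := by omega) (hs := by omega)
      (by omega) (by omega))

private def tE (t : ℕ) (ht : 6 ≤ t) : (GP t).Subgraph :=
  SimpleGraph.singletonSubgraph _ (mkv t 2 1 (by omega) (by omega))

private def tree (t : ℕ) (ht : 6 ≤ t) (n : ℕ) : (GP t).Subgraph :=
  if h : n < t - 3 then big t ht n h
  else if n = t - 3 then tA t ht
  else if n = t - 2 then tB t ht
  else if n = t - 1 then tC t ht
  else if n = t then tD t ht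
  else tE t ht

private lemma tree_eq_big {t n : ℕ} (ht : 6 ≤ t) (h : n < t - 3) :
    tree t ht n = big t ht n h := by unfold tree; rw [dif_pos h]

private lemma tree_eq_A {t : ℕ} (ht : 6 ≤ t) : tree t ht (t - 3) = tA t ht := by
  unfold tree; rw [dif_neg (by omega), if_pos rfl]

private lemma tree_eq_B {t : ℕ} (ht : 6 ≤ t) : tree t ht (t - 2) = tB t ht := by
  unfold tree; rw [dif_neg (by omega), if_neg (by omega), if_pos rfl]

private lemma tree_eq_C {t : ℕ} (ht : 6 ≤ t) : tree t ht (t - 1) = tC t ht := by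
  unfold tree; rw [dif_neg (by omega), if_neg (by omega), if_neg (by omega), if_pos rfl]

private lemma tree_eq_D {t : ℕ} (ht : 6 ≤ t) : tree t ht t = tD t ht := by
  unfold tree
  rw [dif_neg (by omega), if_neg (by omega), if_neg (by omega), if_neg (by omega), if_pos rfl]

private lemma tree_eq_E {t : ℕ} (ht : 6 ≤ t) : tree t ht (t + 1) = tE t ht := by
  unfold tree
  rw [dif_neg (by omega), if_neg (by omega), if_neg (by omega), if_neg (by omega),
    if_neg (by omega)]

end OddMinorConstruction

namespace OddMinorConstruction

open SimpleGraph

private lemma mkv_eq {t x y r s : ℕ} {hx hy hr hs} :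
    mkv t x r hx hr = mkv t y s hy hs ↔ x = y ∧ r = s := by
  simp [mkv, Prod.ext_iff, Fin.ext_iff]

private lemma mem_big {t n : ℕ} (ht : 6 ≤ t) (hn : n < t - 3) {p : Fin t × Fin 3} :
    p ∈ (big t ht n hn).verts ↔
      p = mkv t (n + 3) 0 (by omega) (by omega) ∨
      p = mkv t (bcol (t - 3) n) 1 (bcol_lt ht hn) (by omega) ∨
      p = mkv t (ccol (t - 3) n) 2 (ccol_lt ht hn) (by omega) := by
  simp only [big, SimpleGraph.Subgraph.verts_sup, SimpleGraph.subgraphOfAdj_verts,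
    Set.mem_union, Set.mem_insert_iff, Set.mem_singleton_iff]
  tauto

private lemma mem_tA {t : ℕ} (ht : 6 ≤ t) {p : Fin t × Fin 3} :
    p ∈ (tA t ht).verts ↔
      p = mkv t 0 0 (by omega) (by omega) ∨ p = mkv t 1 1 (by omega) (by omega) := by
  simp [tA]

private lemma mem_tB {t : ℕ} (ht : 6 ≤ t) {p : Fin t × Fin 3} :
    p ∈ (tB t ht).verts ↔
      p = mkv t 0 1 (by omega) (by omega) ∨ p = mkv t 1 2 (by omega) (by omega) := by
  simp [tB]

private lemma mem_tC {t : ℕ} (ht : 6 ≤ t) {p : Fin t × Fin 3} :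
    p ∈ (tC t ht).verts ↔
      p = mkv t 0 2 (by omega) (by omega) ∨ p = mkv t 2 0 (by omega) (by omega) := by
  simp [tC]

private lemma mem_tD {t : ℕ} (ht : 6 ≤ t) {p : Fin t × Fin 3} :
    p ∈ (tD t ht).verts ↔
      p = mkv t 1 0 (by omega) (by omega) ∨ p = mkv t 2 2 (by omega) (by omega) := by
  simp [tD]

private lemma mem_tE {t : ℕ} (ht : 6 ≤ t) {p : Fin t × Fin 3} :
    p ∈ (tE t ht).verts ↔ p = mkv t 2 1 (by omega) (by omega) := by
  simp [tE, SimpleGraph.singletonSubgraph]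

/-- The colouring. -/
private def colr (t : ℕ) : Fin t × Fin 3 → Fin 2 := fun p =>
  if p.2.val = 1 then (if p.1.val = 2 then 0 else 1) else (if p.1.val = 2 then 1 else 0)

private lemma colr_mk {t x r : ℕ} {hx hr} :
    colr t (mkv t x r hx hr) =
      if r = 1 then (if x = 2 then 0 else 1) else (if x = 2 then 1 else 0) := rfl

/-- The owner function, used for disjointness. -/
private def owner (t : ℕ) (p : Fin t × Fin 3) : ℕ :=
  let x := p.1.val
  let r := p.2.val
  let m := t - 3
  if 3 ≤ x then
    (if r = 0 then x - 3
     else if r = 1 then (if 2 ≤ x - 3 then x - 5 else x + m - 5)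
     else (if 1 ≤ x - 3 then x - 4 else x + m - 4))
  else
    if r = 0 then (if x = 0 then m else if x = 1 then m + 3 else m + 2)
    else if r = 1 then (if x = 2 then m + 4 else if x = 0 then m + 1 else m)
    else (if x = 0 then m + 2 else if x = 1 then m + 1 else m + 3)

private lemma owner_mem {t : ℕ} (ht : 6 ≤ t) {n : ℕ} (hn : n < t + 2)
    {p : Fin t × Fin 3} (hp : p ∈ (tree t ht n).verts) : owner t p = n := by
  have h6 : n < t - 3 ∨ n = t - 3 ∨ n = t - 2 ∨ n = t - 1 ∨ n = t ∨ n = t + 1 := by omega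
  rcases h6 with h | h | h | h | h | h
  · rw [tree_eq_big ht h, mem_big ht h] at hp
    rcases hp with rfl | rfl | rfl <;>
      · simp only [owner, mkv, bcol, ccol]
        split_ifs at * <;> omega
  · subst h; rw [tree_eq_A ht, mem_tA ht] at hp
    rcases hp with rfl | rfl <;>
      · simp only [owner, mkv]
        split_ifs at * <;> omega
  · subst h; rw [tree_eq_B ht, mem_tB ht] at hp
    rcases hp with rfl | rfl <;>
      · simp only [owner, mkv]
        split_ifs at * <;> omega
  · subst h; rw [tree_eq_C ht, mem_tC ht] at hp
    rcases hp with rfl | rfl <;>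
      · simp only [owner, mkv]
        split_ifs at * <;> simp_all <;> omega
  · subst h; rw [tree_eq_D ht, mem_tD ht] at hp
    rcases hp with rfl | rfl <;>
      · simp only [owner, mkv]
        split_ifs at * <;> simp_all <;> omega
  · subst h; rw [tree_eq_E ht, mem_tE ht] at hp
    subst hp
    simp only [owner, mkv]
    split_ifs at * <;> omega

end OddMinorConstruction

namespace OddMinorConstruction

open SimpleGraph

private lemma subAdj_iff {V : Type*} {G : SimpleGraph V} {u v a b : V} (h : G.Adj u v) :
    (G.subgraphOfAdj h).Adj a b ↔ (a = u ∧ b = v) ∨ (a = v ∧ b = u) := by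
  rw [SimpleGraph.subgraphOfAdj_adj, Sym2.eq_iff]
  tauto

private lemma colr_00 {t x r : ℕ} {hx hr} (hx2 : x ≠ 2) (hr1 : r ≠ 1) :
    colr t (mkv t x r hx hr) = 0 := by rw [colr_mk]; simp [hx2, hr1]

private lemma colr_11 {t x : ℕ} {hx hr} (hx2 : x ≠ 2) :
    colr t (mkv t x 1 hx hr) = 1 := by rw [colr_mk]; simp [hx2]

private lemma colr_12 {t r : ℕ} {hx hr} (hr1 : r ≠ 1) :
    colr t (mkv t 2 r hx hr) = 1 := by rw [colr_mk]; simp [hr1]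

private lemma colr_02 {t : ℕ} {hx hr} : colr t (mkv t 2 1 hx hr) = 0 := by
  rw [colr_mk]; simp

private lemma tree_isTree {t : ℕ} (ht : 6 ≤ t) (n : ℕ) : (tree t ht n).coe.IsTree := by
  have h6 : n < t - 3 ∨ n = t - 3 ∨ n = t - 2 ∨ n = t - 1 ∨ n = t ∨
      ¬(n < t - 3 ∨ n = t - 3 ∨ n = t - 2 ∨ n = t - 1 ∨ n = t) := by tauto
  rcases h6 with h | h | h | h | h | h
  · rw [tree_eq_big ht h]
    exact path3_isTree _ _ (by simp [mkv_eq])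
  · subst h; rw [tree_eq_A ht]; exact edge_isTree _
  · subst h; rw [tree_eq_B ht]; exact edge_isTree _
  · subst h; rw [tree_eq_C ht]; exact edge_isTree _
  · subst h; rw [tree_eq_D ht]; exact edge_isTree _
  · have : tree t ht n = tE t ht := by
      unfold tree
      rw [dif_neg (by tauto), if_neg (by tauto), if_neg (by tauto), if_neg (by tauto),
        if_neg (by tauto)]
    rw [this]
    exact singleton_isTree _ _

private lemma tree_proper {t : ℕ} (ht : 6 ≤ t) (n : ℕ) :
    ∀ x y, (tree t ht n).Adj x y → colr t x ≠ colr t y := by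
  have h6 : n < t - 3 ∨ n = t - 3 ∨ n = t - 2 ∨ n = t - 1 ∨ n = t ∨
      ¬(n < t - 3 ∨ n = t - 3 ∨ n = t - 2 ∨ n = t - 1 ∨ n = t) := by tauto
  have hb2 : ∀ m k : ℕ, bcol m k ≠ 2 := by intro m k; unfold bcol; omega
  have hc2 : ∀ m k : ℕ, ccol m k ≠ 2 := by intro m k; unfold ccol; omega
  rcases h6 with h | h | h | h | h | h
  · rw [tree_eq_big ht h]
    intro x y hxy
    rw [big, SimpleGraph.Subgraph.sup_adj, subAdj_iff, subAdj_iff] at hxy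
    have k1 : colr t (mkv t (n + 3) 0 (by omega) (by omega)) ≠
        colr t (mkv t (bcol (t - 3) n) 1 (bcol_lt ht h) (by omega)) := by
      rw [colr_00 (by omega) (by omega), colr_11 (hb2 _ _)]; decide
    have k2 : colr t (mkv t (bcol (t - 3) n) 1 (bcol_lt ht h) (by omega)) ≠
        colr t (mkv t (ccol (t - 3) n) 2 (ccol_lt ht h) (by omega)) := by
      rw [colr_11 (hb2 _ _), colr_00 (hc2 _ _) (by omega)]; decide
    rcases hxy with (⟨rfl, rfl⟩ | ⟨rfl, rfl⟩) | (⟨rfl, rfl⟩ | ⟨rfl, rfl⟩)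
    · exact k1
    · exact k1.symm
    · exact k2
    · exact k2.symm
  · subst h; rw [tree_eq_A ht]
    intro x y hxy
    rw [tA, subAdj_iff] at hxy
    have k1 : colr t (mkv t 0 0 (by omega) (by omega)) ≠
        colr t (mkv t 1 1 (by omega) (by omega)) := by
      rw [colr_00 (by omega) (by omega), colr_11 (by omega)]; decide
    rcases hxy with ⟨rfl, rfl⟩ | ⟨rfl, rfl⟩
    · exact k1
    · exact k1.symm
  · subst h; rw [tree_eq_B ht]
    intro x y hxy
    rw [tB, subAdj_iff] at hxy
    have k1 : colr t (mkv t 0 1 (by omega) (by omega)) ≠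
        colr t (mkv t 1 2 (by omega) (by omega)) := by
      rw [colr_11 (by omega), colr_00 (by omega) (by omega)]; decide
    rcases hxy with ⟨rfl, rfl⟩ | ⟨rfl, rfl⟩
    · exact k1
    · exact k1.symm
  · subst h; rw [tree_eq_C ht]
    intro x y hxy
    rw [tC, subAdj_iff] at hxy
    have k1 : colr t (mkv t 0 2 (by omega) (by omega)) ≠
        colr t (mkv t 2 0 (by omega) (by omega)) := by
      rw [colr_00 (by omega) (by omega), colr_12 (by omega)]; decide
    rcases hxy with ⟨rfl, rfl⟩ | ⟨rfl, rfl⟩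
    · exact k1
    · exact k1.symm
  · rw [h, tree_eq_D ht]
    intro x y hxy
    rw [tD, subAdj_iff] at hxy
    have k1 : colr t (mkv t 1 0 (by omega) (by omega)) ≠
        colr t (mkv t 2 2 (by omega) (by omega)) := by
      rw [colr_00 (by omega) (by omega), colr_12 (by omega)]; decide
    rcases hxy with ⟨rfl, rfl⟩ | ⟨rfl, rfl⟩
    · exact k1
    · exact k1.symm
  · have : tree t ht n = tE t ht := by
      unfold tree
      rw [dif_neg (by tauto), if_neg (by tauto), if_neg (by tauto), if_neg (by tauto),
        if_neg (by tauto)]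
    rw [this]
    intro x y hxy
    simp [tE, SimpleGraph.singletonSubgraph_adj] at hxy

end OddMinorConstruction

namespace OddMinorConstruction

open SimpleGraph

private lemma mono_lt {t : ℕ} (ht : 6 ≤ t) {n n' : ℕ} (hlt : n < n') (hn' : n' < t + 2) :
    ∃ x y, x ∈ (tree t ht n).verts ∧ y ∈ (tree t ht n').verts ∧
      (GP t).Adj x y ∧ colr t x = colr t y := by
  have hc3 : ∀ m k : ℕ, 3 ≤ ccol m k := by intro m k; unfold ccol; omega
  have h6 : n' < t - 3 ∨ n' = t - 3 ∨ n' = t - 2 ∨ n' = t - 1 ∨ n' = t ∨ n' = t + 1 := by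
    omega
  rcases h6 with h' | h' | h' | h' | h' | h'
  -- both big
  · have hn : n < t - 3 := by omega
    rw [tree_eq_big ht hn, tree_eq_big ht h']
    by_cases hcc : n + 3 = ccol (t - 3) n'
    · refine ⟨_, _, (mem_big ht hn).mpr (Or.inr (Or.inr rfl)),
        (mem_big ht h').mpr (Or.inl rfl), gadj ?_ (by omega), ?_⟩
      · unfold ccol at hcc ⊢
        split_ifs at hcc ⊢ <;> omega
      · rw [colr_00 (by have := hc3 (t - 3) n; omega) (by omega),
          colr_00 (by omega) (by omega)]
    · refine ⟨_, _, (mem_big ht hn).mpr (Or.inl rfl),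
        (mem_big ht h').mpr (Or.inr (Or.inr rfl)), gadj hcc (by omega), ?_⟩
      rw [colr_00 (by omega) (by omega),
        colr_00 (by have := hc3 (t - 3) n'; omega) (by omega)]
  -- big vs tA
  · have hn : n < t - 3 := by omega
    rw [tree_eq_big ht hn, h', tree_eq_A ht]
    refine ⟨_, _, (mem_big ht hn).mpr (Or.inr (Or.inr rfl)), (mem_tA ht).mpr (Or.inl rfl),
      gadj (by have := hc3 (t - 3) n; omega) (by omega), ?_⟩
    rw [colr_00 (by have := hc3 (t - 3) n; omega) (by omega), colr_00 (by omega) (by omega)]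
  -- n' = tB
  · rw [h', tree_eq_B ht]
    rcases (by omega : n < t - 3 ∨ n = t - 3) with hn | hn
    · rw [tree_eq_big ht hn]
      refine ⟨_, _, (mem_big ht hn).mpr (Or.inl rfl), (mem_tB ht).mpr (Or.inr rfl),
        gadj (by omega) (by omega), ?_⟩
      rw [colr_00 (by omega) (by omega), colr_00 (by omega) (by omega)]
    · rw [hn, tree_eq_A ht]
      refine ⟨_, _, (mem_tA ht).mpr (Or.inl rfl), (mem_tB ht).mpr (Or.inr rfl),
        gadj (by omega) (by omega), ?_⟩
      rw [colr_00 (by omega) (by omega), colr_00 (by omega) (by omega)]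
  -- n' = tC
  · rw [h', tree_eq_C ht]
    rcases (by omega : n < t - 3 ∨ n = t - 3 ∨ n = t - 2) with hn | hn | hn
    · rw [tree_eq_big ht hn]
      refine ⟨_, _, (mem_big ht hn).mpr (Or.inl rfl), (mem_tC ht).mpr (Or.inl rfl),
        gadj (by omega) (by omega), ?_⟩
      rw [colr_00 (by omega) (by omega), colr_00 (by omega) (by omega)]
    · rw [hn, tree_eq_A ht]
      refine ⟨_, _, (mem_tA ht).mpr (Or.inr rfl), (mem_tC ht).mpr (Or.inr rfl),
        gadj (by omega) (by omega), ?_⟩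
      rw [colr_11 (by omega), colr_12 (by omega)]
    · rw [hn, tree_eq_B ht]
      refine ⟨_, _, (mem_tB ht).mpr (Or.inl rfl), (mem_tC ht).mpr (Or.inr rfl),
        gadj (by omega) (by omega), ?_⟩
      rw [colr_11 (by omega), colr_12 (by omega)]
  -- n' = tD
  · rw [h', tree_eq_D ht]
    rcases (by omega : n < t - 3 ∨ n = t - 3 ∨ n = t - 2 ∨ n = t - 1) with hn | hn | hn | hn
    · rw [tree_eq_big ht hn]
      refine ⟨_, _, (mem_big ht hn).mpr (Or.inr (Or.inr rfl)), (mem_tD ht).mpr (Or.inl rfl),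
        gadj (by have := hc3 (t - 3) n; omega) (by omega), ?_⟩
      rw [colr_00 (by have := hc3 (t - 3) n; omega) (by omega), colr_00 (by omega) (by omega)]
    · rw [hn, tree_eq_A ht]
      refine ⟨_, _, (mem_tA ht).mpr (Or.inr rfl), (mem_tD ht).mpr (Or.inr rfl),
        gadj (by omega) (by omega), ?_⟩
      rw [colr_11 (by omega), colr_12 (by omega)]
    · rw [hn, tree_eq_B ht]
      refine ⟨_, _, (mem_tB ht).mpr (Or.inl rfl), (mem_tD ht).mpr (Or.inr rfl),
        gadj (by omega) (by omega), ?_⟩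
      rw [colr_11 (by omega), colr_12 (by omega)]
    · rw [hn, tree_eq_C ht]
      refine ⟨_, _, (mem_tC ht).mpr (Or.inl rfl), (mem_tD ht).mpr (Or.inl rfl),
        gadj (by omega) (by omega), ?_⟩
      rw [colr_00 (by omega) (by omega), colr_00 (by omega) (by omega)]
  -- n' = tE
  · rw [h', tree_eq_E ht]
    rcases (by omega : n < t - 3 ∨ n = t - 3 ∨ n = t - 2 ∨ n = t - 1 ∨ n = t)
      with hn | hn | hn | hn | hn
    · rw [tree_eq_big ht hn]
      refine ⟨_, _, (mem_big ht hn).mpr (Or.inl rfl), (mem_tE ht).mpr rfl,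
        gadj (by omega) (by omega), ?_⟩
      rw [colr_00 (by omega) (by omega), colr_02]
    · rw [hn, tree_eq_A ht]
      refine ⟨_, _, (mem_tA ht).mpr (Or.inl rfl), (mem_tE ht).mpr rfl,
        gadj (by omega) (by omega), ?_⟩
      rw [colr_00 (by omega) (by omega), colr_02]
    · rw [hn, tree_eq_B ht]
      refine ⟨_, _, (mem_tB ht).mpr (Or.inr rfl), (mem_tE ht).mpr rfl,
        gadj (by omega) (by omega), ?_⟩
      rw [colr_00 (by omega) (by omega), colr_02]
    · rw [hn, tree_eq_C ht]
      refine ⟨_, _, (mem_tC ht).mpr (Or.inl rfl), (mem_tE ht).mpr rfl,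
        gadj (by omega) (by omega), ?_⟩
      rw [colr_00 (by omega) (by omega), colr_02]
    · rw [hn, tree_eq_D ht]
      refine ⟨_, _, (mem_tD ht).mpr (Or.inl rfl), (mem_tE ht).mpr rfl,
        gadj (by omega) (by omega), ?_⟩
      rw [colr_00 (by omega) (by omega), colr_02]

end OddMinorConstruction

open OddMinorConstruction

theorem stmt_9 (t : ℕ) (ht : 6 ≤ t) :
    oddHadwiger (dirProd (⊤ : SimpleGraph (Fin t)) (⊤ : SimpleGraph (Fin 3))) ≥ t + 2 := by
  classical
  have key : IsOddMinorOf (⊤ : SimpleGraph (Fin (t + 2))) (GP t) := by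
    refine ⟨fun w => tree t ht w.val, colr t, fun w => tree_isTree ht w.val, ?_,
      fun w => tree_proper ht w.val, ?_⟩
    · intro w w' hne
      rw [Set.disjoint_left]
      intro p hp hp'
      have h1 := owner_mem ht w.isLt hp
      have h2 := owner_mem ht w'.isLt hp'
      exact hne (Fin.ext (by omega))
    · intro w w' hadj
      have hne : (w : ℕ) ≠ (w' : ℕ) := fun e => hadj.ne (Fin.ext e)
      rcases lt_or_gt_of_ne hne with hlt | hlt
      · exact mono_lt ht hlt w'.isLt
      · obtain ⟨x, y, hx, hy, hxy, hc⟩ := mono_lt ht hlt w.isLt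
        exact ⟨y, x, hy, hx, hxy.symm, hc.symm⟩
  have hbdd : BddAbove {r : ℕ | IsOddMinorOf (⊤ : SimpleGraph (Fin r)) (GP t)} := by
    refine ⟨3 * t, fun r hr => ?_⟩
    obtain ⟨T, c, htree, hdisj, -, -⟩ := hr
    have hne : ∀ w : Fin r, (T w).verts.Nonempty := fun w =>
      Set.nonempty_coe_sort.mp (htree w).isConnected.nonempty
    choose f hf using hne
    have hinj : Function.Injective f := by
      intro w w' he
      by_contra hcon
      exact Set.disjoint_left.mp (hdisj hcon) (hf w) (by rw [he]; exact hf w')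
    have hcard := Fintype.card_le_of_injective f hinj
    simp only [Fintype.card_fin, Fintype.card_prod] at hcard
    omega
  exact le_csSup hbdd key
end

section
/- For every integer t ≥ 6, the odd Hadwiger number of the direct product of the complete graphs K_t and K_3 satisfies oh(K_t × K_3) ≤ t + 2. -/
open SimpleGraph

private lemma subgraph_adj_of_two {V : Type*} {G : SimpleGraph V} (H : G.Subgraph)
    (hc : H.coe.Connected) {x y : V} (hx : x ∈ H.verts) (hy : y ∈ H.verts)
    (hv : H.verts = {x, y}) (hxy : x ≠ y) : H.Adj x y := by
  obtain ⟨p⟩ := hc ⟨x, hx⟩ ⟨y, hy⟩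
  have hnn : ¬ p.Nil := Walk.not_nil_of_ne (by simp [Subtype.ext_iff, hxy])
  have hadj : H.coe.Adj ⟨x, hx⟩ (p.getVert 1) := p.adj_snd hnn
  have hmem : ((p.getVert 1 : H.verts) : V) ∈ ({x, y} : Set V) := hv ▸ (p.getVert 1).2
  simp only [Set.mem_insert_iff, Set.mem_singleton_iff] at hmem
  rcases hmem with h1 | h1
  · exfalso
    have he : (p.getVert 1 : H.verts) = ⟨x, hx⟩ := Subtype.ext h1
    rw [he] at hadj
    exact H.coe.irrefl hadj
  · have h2 := (Subgraph.coe_adj H _ _).mp hadj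
    rw [h1] at h2
    exact h2

theorem stmt_10 (t : ℕ) (ht : 6 ≤ t) :
    oddHadwiger (dirProd (⊤ : SimpleGraph (Fin t)) (⊤ : SimpleGraph (Fin 3))) ≤ t + 2 := by
  classical
  apply csSup_le'
  rintro r ⟨T, c, htree, hdisj, hprop, hedge⟩
  -- adjacency in G
  have hGadj : ∀ p q : Fin t × Fin 3, (dirProd (⊤ : SimpleGraph (Fin t)) (⊤ : SimpleGraph (Fin 3))).Adj p q ↔ p.1 ≠ q.1 ∧ p.2 ≠ q.2 := by
    intro p q
    constructor
    · intro h
      have h' : (⊤ : SimpleGraph (Fin t)).Adj p.1 q.1 ∧ (⊤ : SimpleGraph (Fin 3)).Adj p.2 q.2 := h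
      exact ⟨h'.1.ne, h'.2.ne⟩
    · intro h
      exact (⟨h.1, h.2⟩ : (⊤ : SimpleGraph (Fin t)).Adj p.1 q.1 ∧
        (⊤ : SimpleGraph (Fin 3)).Adj p.2 q.2)
  -- nonemptiness of branch sets
  have hex : ∀ w : Fin r, ((T w).verts).Nonempty := by
    intro w
    have := (htree w).isConnected.nonempty
    exact Set.nonempty_coe_sort.mp this
  set S : Fin r → Finset (Fin t × Fin 3) := fun w => (Set.toFinite (T w).verts).toFinset
    with hSdef
  have hSmem : ∀ w a, a ∈ S w ↔ a ∈ (T w).verts := by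
    intro w a
    exact Set.Finite.mem_toFinset _
  have hScard1 : ∀ w, 1 ≤ (S w).card := by
    intro w
    obtain ⟨a, ha⟩ := hex w
    exact Finset.card_pos.mpr ⟨a, (hSmem w a).mpr ha⟩
  -- total size bound
  have hsum : ∑ w : Fin r, (S w).card ≤ 3 * t := by
    have hdisjF : ∀ w ∈ (Finset.univ : Finset (Fin r)), ∀ w' ∈ Finset.univ, w ≠ w' →
        Disjoint (S w) (S w') := by
      intro w _ w' _ hww
      rw [Finset.disjoint_left]
      intro a ha ha'
      exact Set.disjoint_left.mp (hdisj hww) ((hSmem w a).mp ha) ((hSmem w' a).mp ha')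
    calc ∑ w : Fin r, (S w).card = (Finset.univ.biUnion S).card :=
          (Finset.card_biUnion hdisjF).symm
      _ ≤ Fintype.card (Fin t × Fin 3) := Finset.card_le_univ _
      _ = 3 * t := by simp [Fintype.card_prod, Nat.mul_comm]
  -- singleton machinery
  set u : Fin r → Fin t × Fin 3 := fun w => (hex w).choose with hudef
  have hu : ∀ w, u w ∈ (T w).verts := fun w => (hex w).choose_spec
  set A1 : Finset (Fin r) := Finset.univ.filter (fun w => (S w).card = 1) with hA1def
  set A2 : Finset (Fin r) := Finset.univ.filter (fun w => (S w).card = 2) with hA2def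
  have hA1mem : ∀ w, w ∈ A1 ↔ (S w).card = 1 := by intro w; simp [hA1def]
  have hA2mem : ∀ w, w ∈ A2 ↔ (S w).card = 2 := by intro w; simp [hA2def]
  have hsing : ∀ w ∈ A1, (T w).verts = {u w} := by
    intro w hw
    obtain ⟨a, ha⟩ := Finset.card_eq_one.mp ((hA1mem w).mp hw)
    have hva : (T w).verts = {a} := by
      ext z
      rw [← hSmem w z, ha]
      simp
    have : u w = a := by
      have := hu w
      rw [hva] at this
      exact this
    rw [hva, this]
  set γ : Fin 2 := if h : A1.Nonempty then c (u h.choose) else 0 with hγdef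
  have hsingcol : ∀ w ∈ A1, c (u w) = γ := by
    intro w hw
    have hne : A1.Nonempty := ⟨w, hw⟩
    rw [hγdef, dif_pos hne]
    set w0 := hne.choose with hw0def
    have hw0 : w0 ∈ A1 := hne.choose_spec
    by_cases hww : w = w0
    · rw [hww]
    · obtain ⟨x, y, hx, hy, hadj, hcxy⟩ := hedge w w0 (by simp [hww])
      rw [hsing w hw] at hx
      rw [hsing w0 hw0] at hy
      rw [Set.mem_singleton_iff] at hx hy
      rw [← hx, ← hy]
      exact hcxy
  have hsingrow : ∀ w ∈ A1, ∀ w' ∈ A1, w ≠ w' → (u w).2 ≠ (u w').2 := by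
    intro w hw w' hw' hww
    obtain ⟨x, y, hx, hy, hadj, hcxy⟩ := hedge w w' (by simp [hww])
    rw [hsing w hw] at hx
    rw [hsing w' hw'] at hy
    rw [Set.mem_singleton_iff] at hx hy
    rw [← hx, ← hy]
    exact ((hGadj x y).mp hadj).2
  have hA1card : A1.card ≤ 3 := by
    have := Finset.card_le_card_of_injOn (fun w => (u w).2)
      (fun w _ => Finset.mem_univ _)
      (fun w hw w' hw' h => by
        by_contra hne
        exact hsingrow w hw w' hw' hne h)
    simpa using this
  have hfin2 : ∀ a b g : Fin 2, a ≠ b → a = g ∨ b = g := by decide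
  -- two-element branch sets
  have key2 : ∀ w ∈ A2, ∃ x y, (T w).verts = {x, y} ∧ (T w).Adj x y ∧ c x = γ ∧ c y ≠ γ := by
    intro w hw
    obtain ⟨a, b, hab, hS⟩ := Finset.card_eq_two.mp ((hA2mem w).mp hw)
    have hva : (T w).verts = {a, b} := by
      ext z
      rw [← hSmem w z, hS]
      simp
    have ha : a ∈ (T w).verts := by rw [hva]; simp
    have hb : b ∈ (T w).verts := by rw [hva]; simp
    have hadj : (T w).Adj a b := subgraph_adj_of_two (T w) (htree w).isConnected ha hb hva hab
    have hcab : c a ≠ c b := hprop w a b hadj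
    rcases hfin2 (c a) (c b) γ hcab with h | h
    · exact ⟨a, b, hva, hadj, h, by rw [← h]; exact fun hh => hcab hh.symm⟩
    · refine ⟨b, a, by rw [hva]; exact Set.pair_comm a b, hadj.symm, h, ?_⟩
      rw [← h]
      exact hcab
  set gx : Fin r → Fin t × Fin 3 :=
    fun w => if h : ∃ p, p ∈ (T w).verts ∧ c p = γ then h.choose else u w with hgxdef
  set dx : Fin r → Fin t × Fin 3 :=
    fun w => if h : ∃ p, p ∈ (T w).verts ∧ c p ≠ γ then h.choose else u w with hdxdef
  have hA2spec : ∀ w ∈ A2, c (gx w) = γ ∧ c (dx w) ≠ γ ∧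
      (T w).verts = {gx w, dx w} ∧ (dirProd (⊤ : SimpleGraph (Fin t)) (⊤ : SimpleGraph (Fin 3))).Adj (gx w) (dx w) := by
    intro w hw
    obtain ⟨x, y, hv, hadj, hcx, hcy⟩ := key2 w hw
    have hxmem : x ∈ (T w).verts := by rw [hv]; simp
    have hymem : y ∈ (T w).verts := by rw [hv]; simp
    have hg : ∃ p, p ∈ (T w).verts ∧ c p = γ := ⟨x, hxmem, hcx⟩
    have hd : ∃ p, p ∈ (T w).verts ∧ c p ≠ γ := ⟨y, hymem, hcy⟩
    have hgs : gx w ∈ (T w).verts ∧ c (gx w) = γ := by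
      rw [hgxdef]; simp only [dif_pos hg]; exact hg.choose_spec
    have hds : dx w ∈ (T w).verts ∧ c (dx w) ≠ γ := by
      rw [hdxdef]; simp only [dif_pos hd]; exact hd.choose_spec
    have hgx : gx w = x := by
      have := hgs.1
      rw [hv] at this
      rcases this with h | h
      · exact h
      · exfalso; rw [Set.mem_singleton_iff] at h; rw [h] at hgs; exact hcy hgs.2
    have hdx : dx w = y := by
      have := hds.1
      rw [hv] at this
      rcases this with h | h
      · exfalso; rw [h] at hds; exact hds.2 hcx
      · rw [Set.mem_singleton_iff] at h; exact h
    refine ⟨hgs.2, hds.2, by rw [hv, hgx, hdx], ?_⟩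
    rw [hgx, hdx]
    exact (T w).adj_sub hadj
  -- monochromatic edges between two-sets
  have hmono2 : ∀ w ∈ A2, ∀ w' ∈ A2, w ≠ w' →
      (dirProd (⊤ : SimpleGraph (Fin t)) (⊤ : SimpleGraph (Fin 3))).Adj (gx w) (gx w') ∨ (dirProd (⊤ : SimpleGraph (Fin t)) (⊤ : SimpleGraph (Fin 3))).Adj (dx w) (dx w') := by
    intro w hw w' hw' hww
    obtain ⟨hg, hd, hv, _⟩ := hA2spec w hw
    obtain ⟨hg', hd', hv', _⟩ := hA2spec w' hw'
    obtain ⟨x, y, hx, hy, hadj, hcxy⟩ := hedge w w' (by simp [hww])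
    rw [hv] at hx
    rw [hv'] at hy
    rcases hx with hx | hx
    · left
      rcases hy with hy | hy
      · rw [← hx, ← hy]; exact hadj
      · exfalso
        rw [Set.mem_singleton_iff] at hy
        rw [← hx] at hg
        rw [← hy] at hd'
        exact hd' (hcxy.symm.trans hg)
    · right
      rw [Set.mem_singleton_iff] at hx
      rcases hy with hy | hy
      · exfalso
        rw [← hx] at hd
        rw [← hy] at hg'
        exact hd (hcxy.trans hg')
      · rw [Set.mem_singleton_iff] at hy
        rw [← hx, ← hy]; exact hadj
  -- gx rows avoid singleton rows
  have hrowavoid : ∀ w ∈ A2, ∀ w' ∈ A1, (gx w).2 ≠ (u w').2 := by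
    intro w hw w' hw'
    have hww : w ≠ w' := by
      intro h
      have h1 := (hA2mem w).mp hw
      have h2 := (hA1mem w').mp hw'
      rw [h] at h1
      omega
    obtain ⟨hg, hd, hv, _⟩ := hA2spec w hw
    obtain ⟨x, y, hx, hy, hadj, hcxy⟩ := hedge w w' (by simp [hww])
    rw [hsing w' hw'] at hy
    rw [Set.mem_singleton_iff] at hy
    rw [hv] at hx
    rcases hx with hx | hx
    · rw [← hx, ← hy]
      exact ((hGadj x y).mp hadj).2
    · exfalso
      rw [Set.mem_singleton_iff] at hx
      rw [← hx] at hd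
      apply hd
      rw [hcxy, hy]
      exact hsingcol w' hw'
  -- at most two 2-sets per row
  have hfin3 : ∀ a b1 b2 b3 : Fin 3, b1 ≠ a → b2 ≠ a → b3 ≠ a →
      b1 ≠ b2 → b1 ≠ b3 → b2 ≠ b3 → False := by decide
  have hfiber : ∀ a : Fin 3, (A2.filter fun w => (gx w).2 = a).card ≤ 2 := by
    intro a
    by_contra hcon
    push_neg at hcon
    obtain ⟨w1, w2, w3, h1, h2, h3, h12, h13, h23⟩ := Finset.two_lt_card_iff.mp hcon
    simp only [Finset.mem_filter] at h1 h2 h3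
    have hdd : ∀ wi wj, wi ∈ A2 → wj ∈ A2 → (gx wi).2 = a → (gx wj).2 = a → wi ≠ wj →
        (dirProd (⊤ : SimpleGraph (Fin t)) (⊤ : SimpleGraph (Fin 3))).Adj (dx wi) (dx wj) := by
      intro wi wj hwi hwj hai haj hij
      rcases hmono2 wi hwi wj hwj hij with h | h
      · exfalso
        have := ((hGadj _ _).mp h).2
        rw [hai, haj] at this
        exact this rfl
      · exact h
    have hrow : ∀ wi, wi ∈ A2 → (gx wi).2 = a → (dx wi).2 ≠ a := by
      intro wi hwi hai
      have := ((hGadj _ _).mp (hA2spec wi hwi).2.2.2).2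
      rw [hai] at this
      exact fun hh => this hh.symm
    exact hfin3 a (dx w1).2 (dx w2).2 (dx w3).2
      (hrow w1 h1.1 h1.2) (hrow w2 h2.1 h2.2) (hrow w3 h3.1 h3.2)
      (((hGadj _ _).mp (hdd w1 w2 h1.1 h2.1 h1.2 h2.2 h12)).2)
      (((hGadj _ _).mp (hdd w1 w3 h1.1 h3.1 h1.2 h3.2 h13)).2)
      (((hGadj _ _).mp (hdd w2 w3 h2.1 h3.1 h2.2 h3.2 h23)).2)
  -- count A2
  set B : Finset (Fin 3) := Finset.univ \ A1.image (fun w => (u w).2) with hBdef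
  have hA2B : ∀ w ∈ A2, (gx w).2 ∈ B := by
    intro w hw
    rw [hBdef, Finset.mem_sdiff]
    refine ⟨Finset.mem_univ _, ?_⟩
    rw [Finset.mem_image]
    rintro ⟨w', hw', hww⟩
    exact hrowavoid w hw w' hw' hww.symm
  have hA2count : A2.card ≤ 2 * (3 - A1.card) := by
    have h1 : A2.card = ∑ a ∈ B, (A2.filter fun w => (gx w).2 = a).card :=
      Finset.card_eq_sum_card_fiberwise hA2B
    have h2 : ∑ a ∈ B, (A2.filter fun w => (gx w).2 = a).card ≤ ∑ a ∈ B, 2 :=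
      Finset.sum_le_sum (fun a _ => hfiber a)
    have h3 : B.card = 3 - A1.card := by
      rw [hBdef, Finset.card_sdiff_of_subset (Finset.subset_univ _)]
      have : (A1.image (fun w => (u w).2)).card = A1.card :=
        Finset.card_image_of_injOn (fun w hw w' hw' h => by
          by_contra hne
          exact hsingrow w hw w' hw' hne h)
      rw [this]
      simp
    rw [h1]
    calc ∑ a ∈ B, (A2.filter fun w => (gx w).2 = a).card ≤ ∑ a ∈ B, 2 := h2
      _ = 2 * B.card := by rw [Finset.sum_const, smul_eq_mul, Nat.mul_comm]
      _ = 2 * (3 - A1.card) := by rw [h3]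
  -- penalty sum
  have hpen : ∑ w : Fin r, (3 - (S w).card) ≤ 6 := by
    have hsplit : ∀ w : Fin r, (3 - (S w).card) =
        2 * (if (S w).card = 1 then 1 else 0) + (if (S w).card = 2 then 1 else 0) := by
      intro w
      have := hScard1 w
      split_ifs <;> omega
    calc ∑ w : Fin r, (3 - (S w).card)
        = ∑ w : Fin r, (2 * (if (S w).card = 1 then 1 else 0)
            + (if (S w).card = 2 then 1 else 0)) := by
          exact Finset.sum_congr rfl (fun w _ => hsplit w)
      _ = 2 * A1.card + A2.card := by
          rw [Finset.sum_add_distrib, ← Finset.mul_sum]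
          congr 1
          · congr 1
            rw [hA1def]
            exact (Finset.card_filter _ _).symm
          · rw [hA2def]
            exact (Finset.card_filter _ _).symm
      _ ≤ 2 * A1.card + 2 * (3 - A1.card) := by omega
      _ ≤ 6 := by omega
  -- conclusion
  have hfinal : 3 * r ≤ ∑ w : Fin r, (S w).card + ∑ w : Fin r, (3 - (S w).card) := by
    rw [← Finset.sum_add_distrib]
    have : ∀ w : Fin r, 3 ≤ (S w).card + (3 - (S w).card) := by
      intro w
      have := hScard1 w
      omega
    calc 3 * r = ∑ _w : Fin r, 3 := by
          rw [Finset.sum_const, Finset.card_univ, Fintype.card_fin, smul_eq_mul, Nat.mul_comm]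
      _ ≤ _ := Finset.sum_le_sum (fun w _ => this w)
  omega
end
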